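/- arXiv:1303.6948 — 4 statements merged into one kernel-verified Lean document; each statement's English description precedes it below -/
import Mathlib

section
/- Under the transmission conditions with ρ₁₂ > 0 and ρ₃₄ > 0, all eigenvalues of the boundary-value-transmission problem -y'' + q·y = λ·y on (-π,0)∪(0,π) with boundary conditions cos α·y(-π) + sin α·y'(-π) = 0, cos β·y(π) + sin β·y'(π) = 0 and transmission conditions Γ₁(y)=Γ₂(y)=0 are real. That is, if λ ∈ ℂ admits a nontrivial complex-valued solution satisfying all conditions, then λ ∈ ℝ. -/
open Real Set Filter Topology

private lemma im_mul_conj_lin (a b c d : ℝ) (z w : ℂ) :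
    (((a:ℂ)*z + (b:ℂ)*w) * (starRingEnd ℂ) ((c:ℂ)*z + (d:ℂ)*w)).im
      = (a*d - b*c) * (z * (starRingEnd ℂ) w).im := by
  simp [Complex.mul_im, Complex.mul_re, Complex.add_im, Complex.add_re]
  ring

private lemma im_boundary (c s : ℝ) (hcs : c^2 + s^2 = 1) (z w : ℂ)
    (h : (c:ℂ)*z + (s:ℂ)*w = 0) : (w * (starRingEnd ℂ) z).im = 0 := by
  have hre : c*z.re + s*w.re = 0 := by
    have := congrArg Complex.re h; simpa [Complex.add_re, Complex.mul_re] using this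
  have him : c*z.im + s*w.im = 0 := by
    have := congrArg Complex.im h; simpa [Complex.add_im, Complex.mul_im] using this
  have hT : (w.im*z.re - w.re*z.im) * (c^2+s^2) = 0 := by
    linear_combination (c*w.im - s*z.im)*hre + (s*z.re - c*w.re)*him
  rw [hcs, mul_one] at hT
  simp [Complex.mul_im]
  linarith

private lemma transmission_key (a₁ a₂ a₃ a₄ b₁ b₂ b₃ b₄ : ℝ) (zL' zL zR' zR : ℂ)
    (h1 : (a₁:ℂ)*zL' + a₂*zL + a₃*zR' + a₄*zR = 0)
    (h2 : (b₁:ℂ)*zL' + b₂*zL + b₃*zR' + b₄*zR = 0) :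
    (a₁*b₂ - a₂*b₁) * (zL' * (starRingEnd ℂ) zL).im
      = (a₃*b₄ - a₄*b₃) * (zR' * (starRingEnd ℂ) zR).im := by
  have e1 : (a₁:ℂ)*zL' + (a₂:ℂ)*zL = -((a₃:ℂ)*zR' + (a₄:ℂ)*zR) := by linear_combination h1
  have e2 : (b₁:ℂ)*zL' + (b₂:ℂ)*zL = -((b₃:ℂ)*zR' + (b₄:ℂ)*zR) := by linear_combination h2
  have key : (((a₁:ℂ)*zL' + (a₂:ℂ)*zL) * (starRingEnd ℂ) ((b₁:ℂ)*zL' + (b₂:ℂ)*zL)).im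
      = (((a₃:ℂ)*zR' + (a₄:ℂ)*zR) * (starRingEnd ℂ) ((b₃:ℂ)*zR' + (b₄:ℂ)*zR)).im := by
    rw [e1, e2, map_neg, neg_mul_neg]
  rwa [im_mul_conj_lin, im_mul_conj_lin] at key

/-- All eigenvalues of the boundary-value-transmission problem are real: if
`λ ∈ ℂ` admits a nontrivial complex-valued eigenfunction satisfying the
equation, the boundary conditions and the transmission conditions (with
ρ₁₂ > 0, ρ₃₄ > 0), then `λ` is real. -/
theorem eigenvalues_real
    (q : ℝ → ℝ) (hq : ContinuousOn q (Set.Icc (-π) π))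
    (α β : ℝ) (a₁ a₂ a₃ a₄ b₁ b₂ b₃ b₄ : ℝ)
    (hρ12 : a₁ * b₂ - a₂ * b₁ > 0) (hρ34 : a₃ * b₄ - a₄ * b₃ > 0)
    (lam : ℂ) (y y' y'' : ℝ → ℂ) (yL yL' yR yR' : ℂ)
    -- y is twice differentiable on [-π,0) and (0,π]
    (hy : ∀ x ∈ Set.Ico (-π) 0 ∪ Set.Ioc 0 π,
      HasDerivWithinAt y (y' x) (Set.Ico (-π) 0 ∪ Set.Ioc 0 π) x)
    (hy' : ∀ x ∈ Set.Ico (-π) 0 ∪ Set.Ioc 0 π,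
      HasDerivWithinAt y' (y'' x) (Set.Ico (-π) 0 ∪ Set.Ioc 0 π) x)
    -- the differential equation on (-π,0) ∪ (0,π)
    (heq : ∀ x ∈ Set.Ioo (-π) 0 ∪ Set.Ioo 0 π,
      -y'' x + (q x : ℂ) * y x = lam * y x)
    -- one-sided limits at 0
    (hyL : Tendsto y (𝓝[<] 0) (𝓝 yL)) (hyL' : Tendsto y' (𝓝[<] 0) (𝓝 yL'))
    (hyR : Tendsto y (𝓝[>] 0) (𝓝 yR)) (hyR' : Tendsto y' (𝓝[>] 0) (𝓝 yR'))
    -- boundary conditions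
    (hb1 : (Real.cos α : ℂ) * y (-π) + (Real.sin α : ℂ) * y' (-π) = 0)
    (hb2 : (Real.cos β : ℂ) * y π + (Real.sin β : ℂ) * y' π = 0)
    -- transmission conditions
    (ht1 : (a₁ : ℂ) * yL' + (a₂ : ℂ) * yL + (a₃ : ℂ) * yR' + (a₄ : ℂ) * yR = 0)
    (ht2 : (b₁ : ℂ) * yL' + (b₂ : ℂ) * yL + (b₃ : ℂ) * yR' + (b₄ : ℂ) * yR = 0)
    -- nontriviality
    (hnz : ∃ x ∈ Set.Ico (-π) 0 ∪ Set.Ioc 0 π, y x ≠ 0) :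
    lam.im = 0 := by
  by_contra hc0
  set c : ℝ := lam.im with hc
  have hπ : (0:ℝ) < π := Real.pi_pos
  set S : Set ℝ := Set.Ico (-π) 0 ∪ Set.Ioc 0 π with hS
  set h : ℝ → ℝ := fun x => c * (y' x * (starRingEnd ℂ) (y x)).im with hh
  have hmemL : Set.Ico (-π) 0 ⊆ S := Set.subset_union_left
  have hmemR : Set.Ioc 0 π ⊆ S := Set.subset_union_right
  -- derivative of h at interior points
  have hderiv : ∀ x ∈ Set.Ioo (-π) 0 ∪ Set.Ioo 0 π,
      HasDerivAt h (-(c^2 * Complex.normSq (y x))) x := by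
    intro x hx
    have hxS : x ∈ S := by
      rcases hx with hx | hx
      · exact hmemL ⟨hx.1.le, hx.2⟩
      · exact hmemR ⟨hx.1, hx.2.le⟩
    have hnbd : S ∈ 𝓝 x := by
      rcases hx with hx | hx
      · exact Filter.mem_of_superset (isOpen_Ioo.mem_nhds hx)
          (fun t ht => hmemL ⟨ht.1.le, ht.2⟩)
      · exact Filter.mem_of_superset (isOpen_Ioo.mem_nhds hx)
          (fun t ht => hmemR ⟨ht.1, ht.2.le⟩)
    have hy1 : HasDerivAt y (y' x) x := (hy x hxS).hasDerivAt hnbd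
    have hy2 : HasDerivAt y' (y'' x) x := (hy' x hxS).hasDerivAt hnbd
    have hconj : HasDerivAt (fun t => (starRingEnd ℂ) (y t)) ((starRingEnd ℂ) (y' x)) x := by
      simpa using hy1.star
    have hmul : HasDerivAt (fun t => y' t * (starRingEnd ℂ) (y t))
        (y'' x * (starRingEnd ℂ) (y x) + y' x * (starRingEnd ℂ) (y' x)) x :=
      hy2.mul hconj
    have him : HasDerivAt (fun t => (y' t * (starRingEnd ℂ) (y t)).im)
        ((y'' x * (starRingEnd ℂ) (y x) + y' x * (starRingEnd ℂ) (y' x)).im) x :=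
      Complex.imCLM.hasFDerivAt.comp_hasDerivAt x hmul
    have hfin := him.const_mul c
    have hy'' : y'' x = ((q x : ℂ) - lam) * y x := by linear_combination - heq x hx
    refine hfin.congr_deriv ?_
    rw [hy'']
    simp only [Complex.add_im, Complex.mul_im, Complex.mul_re, Complex.sub_re,
      Complex.sub_im, Complex.ofReal_re, Complex.ofReal_im, Complex.conj_re,
      Complex.conj_im, Complex.normSq_apply, hc]
    ring
  -- continuity of h on each closed-ish piece
  have hcont : ∀ T : Set ℝ, T ⊆ S → ContinuousOn h T := by
    intro T hTS x hx
    have hy1 : ContinuousWithinAt y T x := ((hy x (hTS hx)).continuousWithinAt).mono hTS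
    have hy2 : ContinuousWithinAt y' T x := ((hy' x (hTS hx)).continuousWithinAt).mono hTS
    exact continuousWithinAt_const.mul
      (Complex.continuous_im.continuousAt.comp_continuousWithinAt (hy2.mul hy1.star))
  -- antitone on each piece
  have hAntL : AntitoneOn h (Set.Ico (-π) 0) := by
    apply antitoneOn_of_hasDerivWithinAt_nonpos (convex_Ico _ _) (hcont _ hmemL)
      (f' := fun x => -(c^2 * Complex.normSq (y x)))
    · intro x hx
      rw [interior_Ico] at hx
      exact (hderiv x (Or.inl hx)).hasDerivWithinAt
    · intro x hx
      have : (0:ℝ) ≤ c^2 * Complex.normSq (y x) :=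
        mul_nonneg (sq_nonneg _) (Complex.normSq_nonneg _)
      linarith
  have hAntR : AntitoneOn h (Set.Ioc 0 π) := by
    apply antitoneOn_of_hasDerivWithinAt_nonpos (convex_Ioc _ _) (hcont _ hmemR)
      (f' := fun x => -(c^2 * Complex.normSq (y x)))
    · intro x hx
      rw [interior_Ioc] at hx
      exact (hderiv x (Or.inr hx)).hasDerivWithinAt
    · intro x hx
      have : (0:ℝ) ≤ c^2 * Complex.normSq (y x) :=
        mul_nonneg (sq_nonneg _) (Complex.normSq_nonneg _)
      linarith
  -- boundary values
  have hbL : h (-π) = 0 := by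
    have := im_boundary (Real.cos α) (Real.sin α) (by
      have := Real.sin_sq_add_cos_sq α; linarith) (y (-π)) (y' (-π)) hb1
    show c * (y' (-π) * (starRingEnd ℂ) (y (-π))).im = 0
    rw [this, mul_zero]
  have hbR : h π = 0 := by
    have := im_boundary (Real.cos β) (Real.sin β) (by
      have := Real.sin_sq_add_cos_sq β; linarith) (y π) (y' π) hb2
    show c * (y' π * (starRingEnd ℂ) (y π)).im = 0
    rw [this, mul_zero]
  -- limits of h at 0 from both sides
  have htendL : Tendsto h (𝓝[<] (0:ℝ)) (𝓝 (c * (yL' * (starRingEnd ℂ) yL).im)) := by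
    exact tendsto_const_nhds.mul ((Complex.continuous_im.tendsto _).comp
      (hyL'.mul ((Complex.continuous_conj.tendsto _).comp hyL)))
  have htendR : Tendsto h (𝓝[>] (0:ℝ)) (𝓝 (c * (yR' * (starRingEnd ℂ) yR).im)) := by
    exact tendsto_const_nhds.mul ((Complex.continuous_im.tendsto _).comp
      (hyR'.mul ((Complex.continuous_conj.tendsto _).comp hyR)))
  have hmπ : -π ∈ Set.Ico (-π) 0 := ⟨le_refl _, by linarith⟩
  have hπmem : π ∈ Set.Ioc 0 π := ⟨hπ, le_refl _⟩
  -- h ≤ 0 on the left piece, h ≥ 0 on the right piece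
  have hle : ∀ x ∈ Set.Ico (-π) 0, h x ≤ 0 := fun x hx => hbL ▸ hAntL hmπ hx hx.1
  have hge : ∀ x ∈ Set.Ioc 0 π, 0 ≤ h x := fun x hx => hbR ▸ hAntR hx hπmem hx.2
  have hL_le : c * (yL' * (starRingEnd ℂ) yL).im ≤ 0 := by
    apply le_of_tendsto htendL
    filter_upwards [Ioo_mem_nhdsLT (show -π < (0:ℝ) by linarith)] with t ht
    exact hle t ⟨ht.1.le, ht.2⟩
  have hR_ge : 0 ≤ c * (yR' * (starRingEnd ℂ) yR).im := by
    apply ge_of_tendsto htendR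
    filter_upwards [Ioo_mem_nhdsGT hπ] with t ht
    exact hge t ⟨ht.1, ht.2.le⟩
  -- transmission identity forces both limits to vanish
  have hkey := transmission_key a₁ a₂ a₃ a₄ b₁ b₂ b₃ b₄ yL' yL yR' yR ht1 ht2
  have hkey' : (a₁*b₂ - a₂*b₁) * (c * (yL' * (starRingEnd ℂ) yL).im)
      = (a₃*b₄ - a₄*b₃) * (c * (yR' * (starRingEnd ℂ) yR).im) := by
    linear_combination c * hkey
  have hL0 : c * (yL' * (starRingEnd ℂ) yL).im = 0 := by nlinarith
  have hR0 : c * (yR' * (starRingEnd ℂ) yR).im = 0 := by nlinarith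
  -- hence h ≡ 0 on both pieces
  have hzeroL : ∀ x ∈ Set.Ico (-π) 0, h x = 0 := by
    intro x hx
    refine le_antisymm (hle x hx) ?_
    rw [← hL0]
    apply le_of_tendsto htendL
    filter_upwards [Ioo_mem_nhdsLT hx.2] with t ht
    exact hAntL hx ⟨by linarith [hx.1, ht.1], ht.2⟩ ht.1.le
  have hzeroR : ∀ x ∈ Set.Ioc 0 π, h x = 0 := by
    intro x hx
    refine le_antisymm ?_ (hge x hx)
    rw [← hR0]
    apply ge_of_tendsto htendR
    filter_upwards [Ioo_mem_nhdsGT hx.1] with t ht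
    exact hAntR ⟨ht.1, by linarith [hx.2, ht.2]⟩ hx ht.2.le
  -- y vanishes at interior points
  have hyint : ∀ x ∈ Set.Ioo (-π) 0 ∪ Set.Ioo 0 π, y x = 0 := by
    intro x hx
    have hd := hderiv x hx
    have hEq0 : h =ᶠ[𝓝 x] fun _ => (0:ℝ) := by
      rcases hx with hx | hx
      · filter_upwards [isOpen_Ioo.mem_nhds hx] with t ht
        exact hzeroL t ⟨ht.1.le, ht.2⟩
      · filter_upwards [isOpen_Ioo.mem_nhds hx] with t ht
        exact hzeroR t ⟨ht.1, ht.2.le⟩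
    have hd0 : HasDerivAt h 0 x := (hasDerivAt_const x (0:ℝ)).congr_of_eventuallyEq hEq0
    have huniq := hd.unique hd0
    have hc2 : 0 < c^2 := by positivity
    have : Complex.normSq (y x) = 0 := by nlinarith
    exact Complex.normSq_eq_zero.mp this
  -- y vanishes at the endpoints
  have hyend1 : y (-π) = 0 := by
    have hcw : Tendsto y (𝓝[Set.Ioo (-π) 0] (-π)) (𝓝 (y (-π))) :=
      ((hy (-π) (hmemL hmπ)).continuousWithinAt).mono
        (fun t ht => hmemL ⟨ht.1.le, ht.2⟩)
    have h0 : Tendsto y (𝓝[Set.Ioo (-π) 0] (-π)) (𝓝 0) := by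
      apply Tendsto.congr' _ tendsto_const_nhds
      filter_upwards [self_mem_nhdsWithin] with t ht
      exact (hyint t (Or.inl ht)).symm
    have hrw : 𝓝[Set.Ioo (-π) 0] (-π) = 𝓝[>] (-π) :=
      nhdsWithin_Ioo_eq_nhdsGT (by linarith)
    rw [hrw] at hcw h0
    exact tendsto_nhds_unique hcw h0
  have hyend2 : y π = 0 := by
    have hcw : Tendsto y (𝓝[Set.Ioo 0 π] π) (𝓝 (y π)) :=
      ((hy π (hmemR hπmem)).continuousWithinAt).mono
        (fun t ht => hmemR ⟨ht.1, ht.2.le⟩)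
    have h0 : Tendsto y (𝓝[Set.Ioo 0 π] π) (𝓝 0) := by
      apply Tendsto.congr' _ tendsto_const_nhds
      filter_upwards [self_mem_nhdsWithin] with t ht
      exact (hyint t (Or.inr ht)).symm
    have hrw : 𝓝[Set.Ioo 0 π] π = 𝓝[<] π :=
      nhdsWithin_Ioo_eq_nhdsLT hπ
    rw [hrw] at hcw h0
    exact tendsto_nhds_unique hcw h0
  -- contradiction with nontriviality
  obtain ⟨x, hxS, hne⟩ := hnz
  apply hne
  rcases hxS with hx | hx
  · rcases eq_or_lt_of_le hx.1 with heq' | hlt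
    · rw [← heq']; exact hyend1
    · exact hyint x (Or.inl ⟨hlt, hx.2⟩)
  · rcases eq_or_lt_of_le hx.2 with heq' | hlt
    · rw [heq']; exact hyend2
    · exact hyint x (Or.inr ⟨hx.1, hlt⟩)
end

section
/- With φ₁, φ₂, χ₁, χ₂ defined as the fundamental solutions with the initial and matching conditions of the problem, the Wronskians satisfy ρ₃₄·(φ₁(0)·χ₁'(0) - χ₁(0)·φ₁'(0)) = ρ₁₂·(φ₂(0)·χ₂'(0) - χ₂(0)·φ₂'(0)), i.e. ρ₃₄·w₁(λ) = ρ₁₂·w₂(λ). -/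
open Real Set

/-- The Wronskians of the fundamental solutions at `0` satisfy
`ρ₃₄·w₁(λ) = ρ₁₂·w₂(λ)`, where `w₁(λ) = φ₁(0)χ₁'(0) - χ₁(0)φ₁'(0)` and
`w₂(λ) = φ₂(0)χ₂'(0) - χ₂(0)φ₂'(0)`, the minors being
`ρ_{kj} = a_k·b_j - a_j·b_k`. -/
theorem wronskian_transmission_identity
    (q : ℝ → ℝ) (lam α β : ℝ) (a₁ a₂ a₃ a₄ b₁ b₂ b₃ b₄ : ℝ)
    (hρ12 : a₁ * b₂ - a₂ * b₁ ≠ 0) (hρ34 : a₃ * b₄ - a₄ * b₃ ≠ 0)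
    (φ₁ φ₁' φ₁'' φ₂ φ₂' φ₂'' χ₁ χ₁' χ₁'' χ₂ χ₂' χ₂'' : ℝ → ℝ)
    (hdφ1 : ∀ x ∈ Set.Icc (-π) 0, HasDerivWithinAt φ₁ (φ₁' x) (Set.Icc (-π) 0) x)
    (hdφ1' : ∀ x ∈ Set.Icc (-π) 0, HasDerivWithinAt φ₁' (φ₁'' x) (Set.Icc (-π) 0) x)
    (heqφ1 : ∀ x ∈ Set.Icc (-π) 0, -φ₁'' x + q x * φ₁ x = lam * φ₁ x)
    (hiφ : φ₁ (-π) = Real.sin α) (hiφ' : φ₁' (-π) = -Real.cos α)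
    (hdφ2 : ∀ x ∈ Set.Icc 0 π, HasDerivWithinAt φ₂ (φ₂' x) (Set.Icc 0 π) x)
    (hdφ2' : ∀ x ∈ Set.Icc 0 π, HasDerivWithinAt φ₂' (φ₂'' x) (Set.Icc 0 π) x)
    (heqφ2 : ∀ x ∈ Set.Icc 0 π, -φ₂'' x + q x * φ₂ x = lam * φ₂ x)
    (hmφ : φ₂ 0 = ((a₂ * b₃ - a₃ * b₂) * φ₁ 0 + (a₂ * b₄ - a₄ * b₂) * φ₁' 0)
      / (a₁ * b₂ - a₂ * b₁))
    (hmφ' : φ₂' 0 = -((a₁ * b₃ - a₃ * b₁) * φ₁ 0 + (a₁ * b₄ - a₄ * b₁) * φ₁' 0)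
      / (a₁ * b₂ - a₂ * b₁))
    (hdχ2 : ∀ x ∈ Set.Icc 0 π, HasDerivWithinAt χ₂ (χ₂' x) (Set.Icc 0 π) x)
    (hdχ2' : ∀ x ∈ Set.Icc 0 π, HasDerivWithinAt χ₂' (χ₂'' x) (Set.Icc 0 π) x)
    (heqχ2 : ∀ x ∈ Set.Icc 0 π, -χ₂'' x + q x * χ₂ x = lam * χ₂ x)
    (hiχ : χ₂ π = -Real.sin β) (hiχ' : χ₂' π = Real.cos β)
    (hdχ1 : ∀ x ∈ Set.Icc (-π) 0, HasDerivWithinAt χ₁ (χ₁' x) (Set.Icc (-π) 0) x)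
    (hdχ1' : ∀ x ∈ Set.Icc (-π) 0, HasDerivWithinAt χ₁' (χ₁'' x) (Set.Icc (-π) 0) x)
    (heqχ1 : ∀ x ∈ Set.Icc (-π) 0, -χ₁'' x + q x * χ₁ x = lam * χ₁ x)
    (hmχ : χ₁ 0 = -((a₁ * b₄ - a₄ * b₁) * χ₂ 0 + (a₂ * b₄ - a₄ * b₂) * χ₂' 0)
      / (a₃ * b₄ - a₄ * b₃))
    (hmχ' : χ₁' 0 = ((a₁ * b₃ - a₃ * b₁) * χ₂ 0 + (a₂ * b₃ - a₃ * b₂) * χ₂' 0)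
      / (a₃ * b₄ - a₄ * b₃)) :
    (a₃ * b₄ - a₄ * b₃) * (φ₁ 0 * χ₁' 0 - χ₁ 0 * φ₁' 0)
      = (a₁ * b₂ - a₂ * b₁) * (φ₂ 0 * χ₂' 0 - χ₂ 0 * φ₂' 0) := by
  rw [hmχ, hmχ', hmφ, hmφ']
  field_simp
  have h12 : a₁ * b₂ - b₁ * a₂ ≠ 0 := by rwa [mul_comm b₁ a₂]
  field_simp
  ring
end

section
/- Suppose sin α = 0 and sin β = 0 (so cos α, cos β ≠ 0) and ρ₂₄ ≠ 0. With w(λ) = ρ₁₂·(cos β·φ₂(π,λ) + sin β·φ₂'(π,λ)) = ρ₁₂·cos β·φ₂(π,λ), there exist C, R > 0 such that for all s with |s| ≥ R, λ = s², t = Im s: |w(λ) + ρ₂₄·cos α·cos β·cos²(sπ)| ≤ C·|s|⁻¹·e^{2π|t|}. -/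
open Real Set

namespace WAsympt

lemma norm_ofReal_eq_abs (r : ℝ) : ‖(r : ℂ)‖ = |r| := by
  rw [Complex.norm_real, Real.norm_eq_abs]

lemma abs_cos_le (z : ℂ) : ‖Complex.cos z‖ ≤ Real.exp |z.im| := by
  rw [Complex.cos]
  calc ‖(Complex.exp (z * Complex.I) + Complex.exp (-z * Complex.I)) / 2‖
      ≤ (‖Complex.exp (z * Complex.I)‖ + ‖Complex.exp (-z * Complex.I)‖) / 2 := by
        rw [norm_div]
        simp only [Complex.norm_ofNat]
        gcongr
        exact norm_add_le _ _
    _ ≤ Real.exp |z.im| := by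
        rw [Complex.norm_exp, Complex.norm_exp]
        have h1 : (z * Complex.I).re = -z.im := by simp [Complex.mul_re]
        have h2 : (-z * Complex.I).re = z.im := by simp [Complex.mul_re]
        rw [h1, h2]
        have e1 : Real.exp (-z.im) ≤ Real.exp |z.im| := Real.exp_le_exp.2 (neg_le_abs _)
        have e2 : Real.exp (z.im) ≤ Real.exp |z.im| := Real.exp_le_exp.2 (le_abs_self _)
        linarith

lemma abs_sin_le (z : ℂ) : ‖Complex.sin z‖ ≤ Real.exp |z.im| := by
  rw [Complex.sin]
  calc ‖(Complex.exp (-z * Complex.I) - Complex.exp (z * Complex.I)) * Complex.I / 2‖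
      ≤ (‖Complex.exp (-z * Complex.I)‖ + ‖Complex.exp (z * Complex.I)‖) / 2 := by
        rw [norm_div, norm_mul]
        simp only [Complex.norm_ofNat, Complex.norm_I, mul_one]
        gcongr
        exact by simpa using norm_sub_le (Complex.exp (-z * Complex.I)) (Complex.exp (z * Complex.I))
    _ ≤ Real.exp |z.im| := by
        rw [Complex.norm_exp, Complex.norm_exp]
        have h1 : (z * Complex.I).re = -z.im := by simp [Complex.mul_re]
        have h2 : (-z * Complex.I).re = z.im := by simp [Complex.mul_re]
        rw [h1, h2]
        have e1 : Real.exp (-z.im) ≤ Real.exp |z.im| := Real.exp_le_exp.2 (neg_le_abs _)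
        have e2 : Real.exp (z.im) ≤ Real.exp |z.im| := Real.exp_le_exp.2 (le_abs_self _)
        linarith

end WAsympt

namespace WAsympt

lemma hasDerivAt_cos_aux (s : ℂ) (x : ℝ) (ξ : ℝ) :
    HasDerivAt (fun ξ : ℝ => Complex.cos (s * ((x : ℂ) - ξ)))
      (s * Complex.sin (s * ((x : ℂ) - ξ))) ξ := by
  have hu : HasDerivAt (fun z : ℂ => s * ((x : ℂ) - z)) (-s) ξ := by
    simpa using (((hasDerivAt_id (ξ : ℂ)).const_sub (x : ℂ)).const_mul s)
  have := (Complex.hasDerivAt_cos (s * ((x : ℂ) - ξ))).comp (ξ : ℂ) hu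
  have := this.comp_ofReal
  simpa [mul_comm] using this

lemma hasDerivAt_sin_aux (s : ℂ) (x : ℝ) (ξ : ℝ) :
    HasDerivAt (fun ξ : ℝ => Complex.sin (s * ((x : ℂ) - ξ)))
      (-(s * Complex.cos (s * ((x : ℂ) - ξ)))) ξ := by
  have hu : HasDerivAt (fun z : ℂ => s * ((x : ℂ) - z)) (-s) ξ := by
    simpa using (((hasDerivAt_id (ξ : ℂ)).const_sub (x : ℂ)).const_mul s)
  have := (Complex.hasDerivAt_sin (s * ((x : ℂ) - ξ))).comp (ξ : ℂ) hu
  have := this.comp_ofReal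
  simpa [mul_comm] using this

variable {s : ℂ} {q : ℝ → ℝ} {φ φ' φ'' : ℝ → ℂ} {a b : ℝ}

/-- Integral representation of φ (multiplied by s) via variation of constants. -/
lemma rep1 (hab : a ≤ b) (hq : ContinuousOn q (Icc a b))
    (hd : ∀ x ∈ Icc a b, HasDerivWithinAt φ (φ' x) (Icc a b) x)
    (hd' : ∀ x ∈ Icc a b, HasDerivWithinAt φ' (φ'' x) (Icc a b) x)
    (heq : ∀ x ∈ Icc a b, φ'' x = ((q x : ℂ) - s ^ 2) * φ x)
    {x : ℝ} (hx : x ∈ Icc a b) :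
    s * φ x = s * φ a * Complex.cos (s * ((x : ℂ) - a)) + φ' a * Complex.sin (s * ((x : ℂ) - a))
      + ∫ ξ in a..x, Complex.sin (s * ((x : ℂ) - ξ)) * q ξ * φ ξ := by
  set G : ℝ → ℂ := fun ξ => s * φ ξ * Complex.cos (s * ((x : ℂ) - ξ))
    + φ' ξ * Complex.sin (s * ((x : ℂ) - ξ)) with hG
  have hsub : Icc a x ⊆ Icc a b := Icc_subset_Icc le_rfl hx.2
  have hφc : ContinuousOn φ (Icc a b) := fun y hy => (hd y hy).continuousWithinAt
  have hφ'c : ContinuousOn φ' (Icc a b) := fun y hy => (hd' y hy).continuousWithinAt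
  have hGd : ∀ ξ ∈ Icc a b, HasDerivWithinAt G
      (Complex.sin (s * ((x : ℂ) - ξ)) * q ξ * φ ξ) (Icc a b) ξ := by
    intro ξ hξ
    have h1 := ((hd ξ hξ).const_mul s).mul ((hasDerivAt_cos_aux s x ξ).hasDerivWithinAt)
    have h2 := (hd' ξ hξ).mul ((hasDerivAt_sin_aux s x ξ).hasDerivWithinAt)
    have := h1.add h2
    refine this.congr_deriv ?_
    rw [heq ξ hξ]
    ring
  have hGc : ContinuousOn G (Icc a x) :=
    (((continuousOn_const.mul (hφc.mono hsub)).mul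
        ((Complex.continuous_cos.comp (by continuity)).continuousOn)).add
      ((hφ'c.mono hsub).mul ((Complex.continuous_sin.comp (by continuity)).continuousOn)))
  have hint : IntervalIntegrable (fun ξ => Complex.sin (s * ((x : ℂ) - ξ)) * q ξ * φ ξ)
      MeasureTheory.volume a x := by
    apply ContinuousOn.intervalIntegrable
    rw [uIcc_of_le hx.1]
    exact (((Complex.continuous_sin.comp (by continuity)).continuousOn.mul
      ((Complex.continuous_ofReal.comp_continuousOn (hq.mono hsub)))).mul (hφc.mono hsub))
  have hftc := intervalIntegral.integral_eq_sub_of_hasDeriv_right_of_le hx.1 hGc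
    (fun ξ hξ => (hGd ξ ⟨le_of_lt hξ.1, le_trans (le_of_lt hξ.2) hx.2⟩).mono_of_mem_nhdsWithin
      (Icc_mem_nhdsGT_of_mem ⟨le_of_lt hξ.1, lt_of_lt_of_le hξ.2 hx.2⟩)) hint
  have hGx : G x = s * φ x := by simp [hG]
  have hGa : G a = s * φ a * Complex.cos (s * ((x : ℂ) - a))
      + φ' a * Complex.sin (s * ((x : ℂ) - a)) := by simp [hG]
  rw [hftc, hGx, hGa]; ring

/-- Integral representation of φ'. -/
lemma rep2 (hab : a ≤ b) (hq : ContinuousOn q (Icc a b))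
    (hd : ∀ x ∈ Icc a b, HasDerivWithinAt φ (φ' x) (Icc a b) x)
    (hd' : ∀ x ∈ Icc a b, HasDerivWithinAt φ' (φ'' x) (Icc a b) x)
    (heq : ∀ x ∈ Icc a b, φ'' x = ((q x : ℂ) - s ^ 2) * φ x)
    {x : ℝ} (hx : x ∈ Icc a b) :
    φ' x = φ' a * Complex.cos (s * ((x : ℂ) - a)) - s * φ a * Complex.sin (s * ((x : ℂ) - a))
      + ∫ ξ in a..x, Complex.cos (s * ((x : ℂ) - ξ)) * q ξ * φ ξ := by
  set H : ℝ → ℂ := fun ξ => φ' ξ * Complex.cos (s * ((x : ℂ) - ξ))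
    - s * φ ξ * Complex.sin (s * ((x : ℂ) - ξ)) with hH
  have hsub : Icc a x ⊆ Icc a b := Icc_subset_Icc le_rfl hx.2
  have hφc : ContinuousOn φ (Icc a b) := fun y hy => (hd y hy).continuousWithinAt
  have hφ'c : ContinuousOn φ' (Icc a b) := fun y hy => (hd' y hy).continuousWithinAt
  have hHd : ∀ ξ ∈ Icc a b, HasDerivWithinAt H
      (Complex.cos (s * ((x : ℂ) - ξ)) * q ξ * φ ξ) (Icc a b) ξ := by
    intro ξ hξ
    have h1 := (hd' ξ hξ).mul ((hasDerivAt_cos_aux s x ξ).hasDerivWithinAt)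
    have h2 := ((hd ξ hξ).const_mul s).mul ((hasDerivAt_sin_aux s x ξ).hasDerivWithinAt)
    have := h1.sub h2
    refine this.congr_deriv ?_
    rw [heq ξ hξ]
    ring
  have hHc : ContinuousOn H (Icc a x) :=
    (((hφ'c.mono hsub).mul ((Complex.continuous_cos.comp (by continuity)).continuousOn)).sub
      ((continuousOn_const.mul (hφc.mono hsub)).mul
        ((Complex.continuous_sin.comp (by continuity)).continuousOn)))
  have hint : IntervalIntegrable (fun ξ => Complex.cos (s * ((x : ℂ) - ξ)) * q ξ * φ ξ)
      MeasureTheory.volume a x := by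
    apply ContinuousOn.intervalIntegrable
    rw [uIcc_of_le hx.1]
    exact (((Complex.continuous_cos.comp (by continuity)).continuousOn.mul
      ((Complex.continuous_ofReal.comp_continuousOn (hq.mono hsub)))).mul (hφc.mono hsub))
  have hftc := intervalIntegral.integral_eq_sub_of_hasDeriv_right_of_le hx.1 hHc
    (fun ξ hξ => (hHd ξ ⟨le_of_lt hξ.1, le_trans (le_of_lt hξ.2) hx.2⟩).mono_of_mem_nhdsWithin
      (Icc_mem_nhdsGT_of_mem ⟨le_of_lt hξ.1, lt_of_lt_of_le hξ.2 hx.2⟩)) hint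
  have hHx : H x = φ' x := by simp [hH]
  have hHa : H a = φ' a * Complex.cos (s * ((x : ℂ) - a))
      - s * φ a * Complex.sin (s * ((x : ℂ) - a)) := by simp [hH]
  rw [hftc, hHx, hHa]; ring

end WAsympt

namespace WAsympt

variable {s : ℂ} {q : ℝ → ℝ} {φ φ' φ'' : ℝ → ℂ} {a b : ℝ}

lemma im_aux (s : ℂ) (x ξ : ℝ) (h : ξ ≤ x) : |(s * ((x : ℂ) - ξ)).im| = |s.im| * (x - ξ) := by
  have : (s * ((x : ℂ) - ξ)).im = s.im * (x - ξ) := by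
    simp [Complex.mul_im, Complex.sub_im, Complex.sub_re]
  rw [this, abs_mul, abs_of_nonneg (by linarith : (0:ℝ) ≤ x - ξ)]

lemma kernel_bound {Q M : ℝ} (hQ0 : 0 ≤ Q) (hM0 : 0 ≤ M)
    (hq : ∀ y ∈ Icc a b, |q y| ≤ Q)
    (hφ : ∀ y ∈ Icc a b, ‖φ y‖ ≤ M * Real.exp (|s.im| * (y - a)))
    {x : ℝ} (hx : x ∈ Icc a b) {ξ : ℝ} (hξ : ξ ∈ Icc a x) (K : ℂ)
    (hK : ‖K‖ ≤ Real.exp |(s * ((x : ℂ) - ξ)).im|) :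
    ‖K * q ξ * φ ξ‖ ≤ Q * M * Real.exp (|s.im| * (x - a)) := by
  have hξab : ξ ∈ Icc a b := ⟨hξ.1, hξ.2.trans hx.2⟩
  rw [norm_mul, norm_mul, WAsympt.norm_ofReal_eq_abs]
  have h1 : ‖K‖ ≤ Real.exp (|s.im| * (x - ξ)) := by
    rwa [im_aux s x ξ hξ.2] at hK
  calc ‖K‖ * |q ξ| * ‖φ ξ‖
      ≤ Real.exp (|s.im| * (x - ξ)) * Q * (M * Real.exp (|s.im| * (ξ - a))) := by
        apply mul_le_mul (mul_le_mul h1 (hq ξ hξab) (abs_nonneg _) (Real.exp_pos _).le)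
          (hφ ξ hξab) (norm_nonneg _) (by positivity)
    _ = Q * M * (Real.exp (|s.im| * (x - ξ)) * Real.exp (|s.im| * (ξ - a))) := by ring
    _ = Q * M * Real.exp (|s.im| * (x - a)) := by rw [← Real.exp_add]; ring_nf

/-- Self-referential sup bound: `|φ(x)| ≤ 2B e^{t(x-a)}` with `B = |φ(a)| + |φ'(a)|/|s|`. -/
lemma est_sup (hab : a ≤ b) (hq : ContinuousOn q (Icc a b))
    (hd : ∀ x ∈ Icc a b, HasDerivWithinAt φ (φ' x) (Icc a b) x)
    (hd' : ∀ x ∈ Icc a b, HasDerivWithinAt φ' (φ'' x) (Icc a b) x)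
    (heq : ∀ x ∈ Icc a b, φ'' x = ((q x : ℂ) - s ^ 2) * φ x)
    {Q : ℝ} (hQ0 : 0 ≤ Q) (hQb : ∀ x ∈ Icc a b, |q x| ≤ Q)
    (hs1 : 1 ≤ ‖s‖) (hs2 : 2 * (Q * (b - a)) ≤ ‖s‖) :
    ∀ x ∈ Icc a b, ‖φ x‖ ≤
      2 * (‖φ a‖ + ‖φ' a‖ / ‖s‖)
        * Real.exp (|s.im| * (x - a)) := by
  have hs0 : (0:ℝ) < ‖s‖ := lt_of_lt_of_le one_pos hs1
  set t := |s.im| with ht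
  set f : ℝ → ℝ := fun ξ => ‖φ ξ‖ * Real.exp (-(t * (ξ - a))) with hf
  have hφc : ContinuousOn φ (Icc a b) := fun y hy => (hd y hy).continuousWithinAt
  have hfc : ContinuousOn f (Icc a b) :=
    (continuous_norm.comp_continuousOn hφc).mul (by fun_prop)
  obtain ⟨ξ0, hξ0, hmax⟩ := isCompact_Icc.exists_isMaxOn (nonempty_Icc.2 hab) hfc
  set M := f ξ0 with hM
  have hM0 : 0 ≤ M := mul_nonneg (norm_nonneg _) (Real.exp_pos _).le
  have hφle : ∀ y ∈ Icc a b, ‖φ y‖ ≤ M * Real.exp (t * (y - a)) := by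
    intro y hy
    have := hmax hy
    simp only [hf] at this
    have h2 : ‖φ y‖ * Real.exp (-(t * (y - a))) ≤ M := this
    have := mul_le_mul_of_nonneg_right h2 (Real.exp_pos (t * (y - a))).le
    rwa [mul_assoc, ← Real.exp_add, neg_add_cancel, Real.exp_zero, mul_one] at this
  set B := ‖φ a‖ + ‖φ' a‖ / ‖s‖ with hB
  have hB0 : 0 ≤ B := add_nonneg (norm_nonneg _)
    (div_nonneg (norm_nonneg _) hs0.le)
  -- key step: M ≤ 2B via rep1 at ξ0
  have hMle : M ≤ 2 * B := by
    have hrep := rep1 hab hq hd hd' heq hξ0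
    have hIbound : ‖∫ ξ in a..ξ0, Complex.sin (s * ((ξ0 : ℂ) - ξ)) * q ξ * φ ξ‖
        ≤ Q * M * Real.exp (t * (ξ0 - a)) * (ξ0 - a) := by
      have := intervalIntegral.norm_integral_le_of_norm_le_const
        (C := Q * M * Real.exp (t * (ξ0 - a)))
        (f := fun ξ => Complex.sin (s * ((ξ0 : ℂ) - ξ)) * q ξ * φ ξ) (a := a) (b := ξ0) ?_
      · rw [abs_of_nonneg (by linarith [hξ0.1] : (0:ℝ) ≤ ξ0 - a)] at this
        exact this
      · intro ξ hξ
        rw [uIoc_of_le hξ0.1] at hξ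
        exact kernel_bound hQ0 hM0 hQb hφle hξ0 ⟨hξ.1.le, hξ.2⟩ _ (abs_sin_le _)
    have h1 : ‖s‖ * ‖φ ξ0‖ ≤
        ‖s‖ * ‖φ a‖ * Real.exp (t * (ξ0 - a))
        + ‖φ' a‖ * Real.exp (t * (ξ0 - a))
        + Q * M * Real.exp (t * (ξ0 - a)) * (ξ0 - a) := by
      calc ‖s‖ * ‖φ ξ0‖ = ‖s * φ ξ0‖ := (norm_mul _ _).symm
        _ = ‖s * φ a * Complex.cos (s * ((ξ0 : ℂ) - a))
            + φ' a * Complex.sin (s * ((ξ0 : ℂ) - a))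
            + ∫ ξ in a..ξ0, Complex.sin (s * ((ξ0 : ℂ) - ξ)) * q ξ * φ ξ‖ := by rw [hrep]
        _ ≤ ‖s * φ a * Complex.cos (s * ((ξ0 : ℂ) - a))‖
            + ‖φ' a * Complex.sin (s * ((ξ0 : ℂ) - a))‖
            + ‖∫ ξ in a..ξ0, Complex.sin (s * ((ξ0 : ℂ) - ξ)) * q ξ * φ ξ‖ :=
          (norm_add_le _ _).trans (by gcongr; exact norm_add_le _ _)
        _ ≤ ‖s‖ * ‖φ a‖ * Real.exp (t * (ξ0 - a))
            + ‖φ' a‖ * Real.exp (t * (ξ0 - a))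
            + Q * M * Real.exp (t * (ξ0 - a)) * (ξ0 - a) := by
          gcongr
          · rw [norm_mul, norm_mul]
            gcongr
            exact (abs_cos_le _).trans (by rw [im_aux s ξ0 a hξ0.1])
          · rw [norm_mul]
            gcongr
            exact (abs_sin_le _).trans (by rw [im_aux s ξ0 a hξ0.1])
    -- divide by |s| e^{t(ξ0-a)}
    have hE : (0:ℝ) < Real.exp (t * (ξ0 - a)) := Real.exp_pos _
    have hMval : M = ‖φ ξ0‖ * Real.exp (-(t * (ξ0 - a))) := rfl
    have hφξ0 : ‖φ ξ0‖ = M * Real.exp (t * (ξ0 - a)) := by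
      rw [hMval, mul_assoc, ← Real.exp_add, neg_add_cancel, Real.exp_zero, mul_one]
    rw [hφξ0] at h1
    have h2 : ‖s‖ * M ≤ ‖s‖ * ‖φ a‖
        + ‖φ' a‖ + Q * M * (ξ0 - a) := by
      have := (mul_le_mul_iff_of_pos_right hE).mp (by linarith [h1] :
        (‖s‖ * M) * Real.exp (t * (ξ0 - a)) ≤
        (‖s‖ * ‖φ a‖ + ‖φ' a‖ + Q * M * (ξ0 - a))
          * Real.exp (t * (ξ0 - a)))
      exact this
    have h3 : Q * M * (ξ0 - a) ≤ ‖s‖ * M / 2 := by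
      have hξ0a : ξ0 - a ≤ b - a := by linarith [hξ0.2]
      have : Q * (ξ0 - a) ≤ ‖s‖ / 2 := by
        have h4 : Q * (ξ0 - a) ≤ Q * (b - a) := by
          apply mul_le_mul_of_nonneg_left hξ0a hQ0
        linarith
      calc Q * M * (ξ0 - a) = Q * (ξ0 - a) * M := by ring
        _ ≤ ‖s‖ / 2 * M := mul_le_mul_of_nonneg_right this hM0
        _ = ‖s‖ * M / 2 := by ring
    have h5 : ‖s‖ * M / 2 ≤ ‖s‖ * ‖φ a‖
        + ‖φ' a‖ := by linarith
    rw [hB, ← mul_le_mul_iff_of_pos_left hs0]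
    have hexp : ‖s‖ * (2 * (‖φ a‖ + ‖φ' a‖ / ‖s‖))
        = 2 * (‖s‖ * ‖φ a‖) + 2 * ‖φ' a‖ := by
      field_simp
    rw [hexp]; linarith
  intro x hx
  calc ‖φ x‖ ≤ M * Real.exp (t * (x - a)) := hφle x hx
    _ ≤ 2 * B * Real.exp (t * (x - a)) := by gcongr

lemma est_rem1 (hab : a ≤ b) (hq : ContinuousOn q (Icc a b))
    (hd : ∀ x ∈ Icc a b, HasDerivWithinAt φ (φ' x) (Icc a b) x)
    (hd' : ∀ x ∈ Icc a b, HasDerivWithinAt φ' (φ'' x) (Icc a b) x)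
    (heq : ∀ x ∈ Icc a b, φ'' x = ((q x : ℂ) - s ^ 2) * φ x)
    {Q : ℝ} (hQ0 : 0 ≤ Q) (hQb : ∀ x ∈ Icc a b, |q x| ≤ Q)
    (hs1 : 1 ≤ ‖s‖) (hs2 : 2 * (Q * (b - a)) ≤ ‖s‖) :
    ‖s * φ b - (s * φ a * Complex.cos (s * ((b : ℂ) - a))
        + φ' a * Complex.sin (s * ((b : ℂ) - a)))‖
      ≤ Q * (2 * (‖φ a‖ + ‖φ' a‖ / ‖s‖))
        * Real.exp (|s.im| * (b - a)) * (b - a) := by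
  have hφle := est_sup hab hq hd hd' heq hQ0 hQb hs1 hs2
  have hrep := rep1 hab hq hd hd' heq (right_mem_Icc.2 hab)
  set B2 := 2 * (‖φ a‖ + ‖φ' a‖ / ‖s‖) with hB2
  have hB20 : 0 ≤ B2 := by
    have hs0 : (0:ℝ) < ‖s‖ := lt_of_lt_of_le one_pos hs1
    positivity
  have : s * φ b - (s * φ a * Complex.cos (s * ((b : ℂ) - a))
      + φ' a * Complex.sin (s * ((b : ℂ) - a)))
      = ∫ ξ in a..b, Complex.sin (s * ((b : ℂ) - ξ)) * q ξ * φ ξ := by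
    rw [hrep]; ring
  rw [this]
  have := intervalIntegral.norm_integral_le_of_norm_le_const
    (C := Q * B2 * Real.exp (|s.im| * (b - a)))
    (f := fun ξ => Complex.sin (s * ((b : ℂ) - ξ)) * q ξ * φ ξ) (a := a) (b := b) ?_
  · rwa [abs_of_nonneg (by linarith : (0:ℝ) ≤ b - a)] at this
  · intro ξ hξ
    rw [uIoc_of_le hab] at hξ
    exact kernel_bound hQ0 hB20 hQb hφle (right_mem_Icc.2 hab) ⟨hξ.1.le, hξ.2⟩ _ (abs_sin_le _)

lemma est_rem2 (hab : a ≤ b) (hq : ContinuousOn q (Icc a b))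
    (hd : ∀ x ∈ Icc a b, HasDerivWithinAt φ (φ' x) (Icc a b) x)
    (hd' : ∀ x ∈ Icc a b, HasDerivWithinAt φ' (φ'' x) (Icc a b) x)
    (heq : ∀ x ∈ Icc a b, φ'' x = ((q x : ℂ) - s ^ 2) * φ x)
    {Q : ℝ} (hQ0 : 0 ≤ Q) (hQb : ∀ x ∈ Icc a b, |q x| ≤ Q)
    (hs1 : 1 ≤ ‖s‖) (hs2 : 2 * (Q * (b - a)) ≤ ‖s‖) :
    ‖φ' b - (φ' a * Complex.cos (s * ((b : ℂ) - a))
        - s * φ a * Complex.sin (s * ((b : ℂ) - a)))‖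
      ≤ Q * (2 * (‖φ a‖ + ‖φ' a‖ / ‖s‖))
        * Real.exp (|s.im| * (b - a)) * (b - a) := by
  have hφle := est_sup hab hq hd hd' heq hQ0 hQb hs1 hs2
  have hrep := rep2 hab hq hd hd' heq (right_mem_Icc.2 hab)
  set B2 := 2 * (‖φ a‖ + ‖φ' a‖ / ‖s‖) with hB2
  have hB20 : 0 ≤ B2 := by
    have hs0 : (0:ℝ) < ‖s‖ := lt_of_lt_of_le one_pos hs1
    positivity
  have : φ' b - (φ' a * Complex.cos (s * ((b : ℂ) - a))
      - s * φ a * Complex.sin (s * ((b : ℂ) - a)))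
      = ∫ ξ in a..b, Complex.cos (s * ((b : ℂ) - ξ)) * q ξ * φ ξ := by
    rw [hrep]; ring
  rw [this]
  have := intervalIntegral.norm_integral_le_of_norm_le_const
    (C := Q * B2 * Real.exp (|s.im| * (b - a)))
    (f := fun ξ => Complex.cos (s * ((b : ℂ) - ξ)) * q ξ * φ ξ) (a := a) (b := b) ?_
  · rwa [abs_of_nonneg (by linarith : (0:ℝ) ≤ b - a)] at this
  · intro ξ hξ
    rw [uIoc_of_le hab] at hξ
    exact kernel_bound hQ0 hB20 hQb hφle (right_mem_Icc.2 hab) ⟨hξ.1.le, hξ.2⟩ _ (abs_cos_le _)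

end WAsympt

set_option maxHeartbeats 1000000 in
/-- Asymptotics of the characteristic function
`w(λ) = ρ₁₂·(cos β·φ₂(π,λ) + sin β·φ₂'(π,λ)) = ρ₁₂·cos β·φ₂(π,λ)` when
`sin α = 0`, `sin β = 0` and `ρ₂₄ ≠ 0`:
`|w(λ) + ρ₂₄·cos α·cos β·cos²(sπ)| ≤ C·|s|⁻¹·e^{2π|t|}` for `|s| ≥ R`, where
`λ = s²`, `t = Im s`. -/
theorem w_asymptotics_case_iv
    (q : ℝ → ℝ) (hq : ContinuousOn q (Set.Icc (-π) π))
    (α β : ℝ) (hα : Real.sin α = 0) (hβ : Real.sin β = 0)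
    (a₁ a₂ a₃ a₄ b₁ b₂ b₃ b₄ : ℝ)
    (hρ12 : a₁ * b₂ - a₂ * b₁ ≠ 0) (hρ24 : a₂ * b₄ - a₄ * b₂ ≠ 0)
    (φ₁ φ₁' φ₁'' φ₂ φ₂' φ₂'' : ℂ → ℝ → ℂ)
    -- φ₁ solves the equation on [-π,0] with the initial conditions
    (hd1 : ∀ s : ℂ, ∀ x ∈ Set.Icc (-π) 0,
      HasDerivWithinAt (φ₁ s) (φ₁' s x) (Set.Icc (-π) 0) x)
    (hd1' : ∀ s : ℂ, ∀ x ∈ Set.Icc (-π) 0,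
      HasDerivWithinAt (φ₁' s) (φ₁'' s x) (Set.Icc (-π) 0) x)
    (heq1 : ∀ s : ℂ, ∀ x ∈ Set.Icc (-π) 0,
      -φ₁'' s x + (q x : ℂ) * φ₁ s x = s ^ 2 * φ₁ s x)
    (hi : ∀ s : ℂ, φ₁ s (-π) = 0)
    (hi' : ∀ s : ℂ, φ₁' s (-π) = -(Real.cos α : ℂ))
    -- φ₂ solves the equation on [0,π] with the matching conditions
    (hd2 : ∀ s : ℂ, ∀ x ∈ Set.Icc 0 π,
      HasDerivWithinAt (φ₂ s) (φ₂' s x) (Set.Icc 0 π) x)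
    (hd2' : ∀ s : ℂ, ∀ x ∈ Set.Icc 0 π,
      HasDerivWithinAt (φ₂' s) (φ₂'' s x) (Set.Icc 0 π) x)
    (heq2 : ∀ s : ℂ, ∀ x ∈ Set.Icc 0 π,
      -φ₂'' s x + (q x : ℂ) * φ₂ s x = s ^ 2 * φ₂ s x)
    (hm : ∀ s : ℂ, φ₂ s 0 = (((a₂ * b₃ - a₃ * b₂ : ℝ) : ℂ) * φ₁ s 0
      + ((a₂ * b₄ - a₄ * b₂ : ℝ) : ℂ) * φ₁' s 0) / ((a₁ * b₂ - a₂ * b₁ : ℝ) : ℂ))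
    (hm' : ∀ s : ℂ, φ₂' s 0 = -(((a₁ * b₃ - a₃ * b₁ : ℝ) : ℂ) * φ₁ s 0
      + ((a₁ * b₄ - a₄ * b₁ : ℝ) : ℂ) * φ₁' s 0) / ((a₁ * b₂ - a₂ * b₁ : ℝ) : ℂ)) :
    ∃ C > 0, ∃ R > 0, ∀ s : ℂ, R ≤ ‖s‖ →
      ‖(((a₁ * b₂ - a₂ * b₁ : ℝ) : ℂ)
          * ((Real.cos β : ℂ) * φ₂ s π + (Real.sin β : ℂ) * φ₂' s π)
        + ((a₂ * b₄ - a₄ * b₂ : ℝ) : ℂ) * (Real.cos α : ℂ) * (Real.cos β : ℂ)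
          * Complex.cos (s * π) ^ 2)‖
        ≤ C * ‖s‖⁻¹ * Real.exp (2 * π * |s.im|) := by
  classical
  -- bound for q
  obtain ⟨Q, hQ0, hQb⟩ : ∃ Q : ℝ, 0 ≤ Q ∧ ∀ x ∈ Set.Icc (-π) π, |q x| ≤ Q := by
    obtain ⟨Q0, hQ0b⟩ := isCompact_Icc.exists_bound_of_continuousOn hq
    exact ⟨max Q0 0, le_max_right _ _, fun x hx =>
      le_trans (by simpa [Real.norm_eq_abs] using hQ0b x hx) (le_max_left _ _)⟩
  -- constants
  set cα := |Real.cos α| with hcα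
  have hcα0 : 0 ≤ cα := abs_nonneg _
  set r12 := a₁ * b₂ - a₂ * b₁ with hr12
  set r23 := a₂ * b₃ - a₃ * b₂ with hr23
  set r24 := a₂ * b₄ - a₄ * b₂ with hr24
  set r13 := a₁ * b₃ - a₃ * b₁ with hr13
  set r14 := a₁ * b₄ - a₄ * b₁ with hr14
  have hQπ : (0:ℝ) ≤ 2 * Q * π := by
    have := pi_pos.le
    nlinarith
  set c₂ : ℝ := 2 * Q * π * cα with hc₂
  have hc₂0 : 0 ≤ c₂ := mul_nonneg hQπ hcα0
  set c₁ : ℝ := cα + c₂ with hc₁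
  have hc₁0 : 0 ≤ c₁ := add_nonneg hcα0 hc₂0
  have hr12' : (0:ℝ) < |r12| := abs_pos.2 hρ12
  set c₃ : ℝ := (|r23| * c₁ + |r24| * c₂) / |r12| with hc₃
  have hc₃0 : 0 ≤ c₃ := div_nonneg
    (add_nonneg (mul_nonneg (abs_nonneg _) hc₁0) (mul_nonneg (abs_nonneg _) hc₂0)) (abs_nonneg _)
  set c₄ : ℝ := c₃ + |r24| / |r12| * cα with hc₄
  have hc₄0 : 0 ≤ c₄ := add_nonneg hc₃0
    (mul_nonneg (div_nonneg (abs_nonneg _) (abs_nonneg _)) hcα0)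
  set c₅ : ℝ := (|r13| * c₁ + |r14| * c₁) / |r12| with hc₅
  have hc₅0 : 0 ≤ c₅ := div_nonneg
    (add_nonneg (mul_nonneg (abs_nonneg _) hc₁0) (mul_nonneg (abs_nonneg _) hc₁0)) (abs_nonneg _)
  set c₆ : ℝ := 2 * Q * π * (c₄ + c₅) with hc₆
  have hc₆0 : 0 ≤ c₆ := mul_nonneg hQπ (add_nonneg hc₄0 hc₅0)
  have hCpos : (0:ℝ) < |r12| * (c₆ + c₃ + c₅) + 1 := by
    have : 0 ≤ |r12| * (c₆ + c₃ + c₅) := mul_nonneg (abs_nonneg _) (by linarith)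
    linarith
  refine ⟨|r12| * (c₆ + c₃ + c₅) + 1, hCpos, max 1 (2 * (Q * π)),
    lt_of_lt_of_le one_pos (le_max_left _ _), ?_⟩
  intro s hs
  have hA1 : 1 ≤ ‖s‖ := le_trans (le_max_left _ _) hs
  have hA2 : 2 * (Q * π) ≤ ‖s‖ := le_trans (le_max_right _ _) hs
  have hA0 : (0:ℝ) < ‖s‖ := lt_of_lt_of_le one_pos hA1
  set A := ‖s‖ with hA
  set t := |s.im| with htdef
  set E : ℝ := Real.exp (t * π) with hE
  have hE0 : (0:ℝ) < E := Real.exp_pos _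
  have hE1 : (1:ℝ) ≤ E := by
    rw [hE]; exact Real.one_le_exp (by positivity)
  -- interval 1
  have hab1 : (-π : ℝ) ≤ 0 := neg_nonpos.2 pi_pos.le
  have hsub1 : Set.Icc (-π) (0:ℝ) ⊆ Set.Icc (-π) π := Set.Icc_subset_Icc le_rfl pi_pos.le
  have heq1' : ∀ x ∈ Set.Icc (-π) (0:ℝ), φ₁'' s x = ((q x : ℂ) - s ^ 2) * φ₁ s x := by
    intro x hx; linear_combination -(heq1 s x hx)
  have hba1 : (0:ℝ) - (-π) = π := by ring
  have hs2a : 2 * (Q * ((0:ℝ) - (-π))) ≤ A := by rw [hba1]; exact hA2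
  have h1 := WAsympt.est_rem1 hab1 (hq.mono hsub1) (hd1 s) (hd1' s) heq1' hQ0
    (fun x hx => hQb x (hsub1 hx)) hA1 hs2a
  have h2 := WAsympt.est_rem2 hab1 (hq.mono hsub1) (hd1 s) (hd1' s) heq1' hQ0
    (fun x hx => hQb x (hsub1 hx)) hA1 hs2a
  rw [hi s, hi' s] at h1 h2
  -- clean up h1, h2
  have hcoe : ((0:ℝ) : ℂ) - ((-π : ℝ) : ℂ) = (π : ℂ) := by push_cast; ring
  rw [hcoe] at h1 h2
  rw [hba1] at h1 h2
  have habsneg : ‖-(Real.cos α : ℂ)‖ = cα := by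
    rw [norm_neg, WAsympt.norm_ofReal_eq_abs]
  rw [habsneg] at h1 h2
  simp only [mul_zero, zero_mul, zero_add, norm_zero] at h1 h2
  -- h1 : abs (s * φ₁ s 0 - (-(cosα) * sin (s*π))) ≤ Q * (2*(0 + cα/A)) * E * π
  have k1 : ‖s * φ₁ s 0 + (Real.cos α : ℂ) * Complex.sin (s * (π:ℂ))‖
      ≤ c₂ / A * E := by
    have e1 : s * φ₁ s 0 + (Real.cos α : ℂ) * Complex.sin (s * (π:ℂ))
        = s * φ₁ s 0 - -(Real.cos α : ℂ) * Complex.sin (s * (π:ℂ)) := by ring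
    rw [e1]
    refine h1.trans (le_of_eq ?_)
    rw [hc₂, ← hA, ← htdef, ← hE]; field_simp
  have k2 : ‖φ₁' s 0 + (Real.cos α : ℂ) * Complex.cos (s * (π:ℂ))‖
      ≤ c₂ / A * E := by
    have e1 : φ₁' s 0 + (Real.cos α : ℂ) * Complex.cos (s * (π:ℂ))
        = φ₁' s 0 - (-(Real.cos α : ℂ) * Complex.cos (s * (π:ℂ)) - 0) := by ring
    rw [e1]
    refine h2.trans (le_of_eq ?_)
    rw [hc₂, ← hA, ← htdef, ← hE]; field_simp
  -- bounds on |sin(sπ)|, |cos(sπ)|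
  have him : (s * (π:ℂ)).im = s.im * π := by simp [Complex.mul_im]
  have himabs : |(s * (π:ℂ)).im| = t * π := by
    rw [him, abs_mul, abs_of_nonneg pi_pos.le]
  have hsinb : ‖Complex.sin (s * (π:ℂ))‖ ≤ E := by
    refine (WAsympt.abs_sin_le _).trans (le_of_eq ?_)
    rw [himabs]
  have hcosb : ‖Complex.cos (s * (π:ℂ))‖ ≤ E := by
    refine (WAsympt.abs_cos_le _).trans (le_of_eq ?_)
    rw [himabs]
  have hEA : E / A ≤ E := div_le_self hE0.le hA1
  -- |φ₁(0)| and |φ₁'(0)| bounds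
  have hφ10 : ‖φ₁ s 0‖ ≤ c₁ * E / A := by
    rw [le_div_iff₀ hA0]
    have h5 : ‖s * φ₁ s 0‖ ≤ c₁ * E := by
      have step1 : ‖s * φ₁ s 0‖
          = ‖(s * φ₁ s 0 + (Real.cos α : ℂ) * Complex.sin (s * (π:ℂ)))
            - (Real.cos α : ℂ) * Complex.sin (s * (π:ℂ))‖ := by congr 1; ring
      have step2 := norm_sub_le
        (s * φ₁ s 0 + (Real.cos α : ℂ) * Complex.sin (s * (π:ℂ)))
        ((Real.cos α : ℂ) * Complex.sin (s * (π:ℂ)))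
      have step3 : ‖(Real.cos α : ℂ) * Complex.sin (s * (π:ℂ))‖ ≤ cα * E := by
        rw [norm_mul, WAsympt.norm_ofReal_eq_abs]
        exact mul_le_mul_of_nonneg_left hsinb hcα0
      have step4 : c₂ / A * E ≤ c₂ * E :=
        mul_le_mul_of_nonneg_right (div_le_self hc₂0 hA1) hE0.le
      calc ‖s * φ₁ s 0‖
          = ‖(s * φ₁ s 0 + (Real.cos α : ℂ) * Complex.sin (s * (π:ℂ)))
            - (Real.cos α : ℂ) * Complex.sin (s * (π:ℂ))‖ := step1
        _ ≤ ‖s * φ₁ s 0 + (Real.cos α : ℂ) * Complex.sin (s * (π:ℂ))‖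
            + ‖(Real.cos α : ℂ) * Complex.sin (s * (π:ℂ))‖ := step2
        _ ≤ c₂ / A * E + cα * E := add_le_add k1 step3
        _ ≤ c₂ * E + cα * E := by linarith
        _ = c₁ * E := by rw [hc₁]; ring
    calc ‖φ₁ s 0‖ * A = ‖s * φ₁ s 0‖ := by
          rw [norm_mul]; ring
      _ ≤ c₁ * E := h5
  have hφ1'0 : ‖φ₁' s 0‖ ≤ c₁ * E := by
    have step1 : ‖φ₁' s 0‖
        = ‖(φ₁' s 0 + (Real.cos α : ℂ) * Complex.cos (s * (π:ℂ)))
          - (Real.cos α : ℂ) * Complex.cos (s * (π:ℂ))‖ := by congr 1; ring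
    have step2 := norm_sub_le
      (φ₁' s 0 + (Real.cos α : ℂ) * Complex.cos (s * (π:ℂ)))
      ((Real.cos α : ℂ) * Complex.cos (s * (π:ℂ)))
    have step3 : ‖(Real.cos α : ℂ) * Complex.cos (s * (π:ℂ))‖ ≤ cα * E := by
      rw [norm_mul, WAsympt.norm_ofReal_eq_abs]
      exact mul_le_mul_of_nonneg_left hcosb hcα0
    have step4 : c₂ / A * E ≤ c₂ * E :=
      mul_le_mul_of_nonneg_right (div_le_self hc₂0 hA1) hE0.le
    calc ‖φ₁' s 0‖
        = ‖(φ₁' s 0 + (Real.cos α : ℂ) * Complex.cos (s * (π:ℂ)))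
          - (Real.cos α : ℂ) * Complex.cos (s * (π:ℂ))‖ := step1
      _ ≤ ‖φ₁' s 0 + (Real.cos α : ℂ) * Complex.cos (s * (π:ℂ))‖
          + ‖(Real.cos α : ℂ) * Complex.cos (s * (π:ℂ))‖ := step2
      _ ≤ c₂ / A * E + cα * E := add_le_add k2 step3
      _ ≤ c₂ * E + cα * E := by linarith
      _ = c₁ * E := by rw [hc₁]; ring
  -- matching conditions
  have hr12c : ((r12 : ℝ) : ℂ) ≠ 0 := Complex.ofReal_ne_zero.2 hρ12
  have hδeq : φ₂ s 0 + ((r24 / r12 : ℝ) : ℂ) * (Real.cos α : ℂ) * Complex.cos (s * (π:ℂ))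
      = ((r23 : ℝ) : ℂ) * φ₁ s 0 / ((r12 : ℝ) : ℂ)
        + ((r24 : ℝ) : ℂ) * (φ₁' s 0 + (Real.cos α : ℂ) * Complex.cos (s * (π:ℂ)))
          / ((r12 : ℝ) : ℂ) := by
    rw [hm s]
    push_cast
    field_simp
    ring
  have hδ : ‖φ₂ s 0
      + ((r24 / r12 : ℝ) : ℂ) * (Real.cos α : ℂ) * Complex.cos (s * (π:ℂ))‖ ≤ c₃ * E / A := by
    rw [hδeq]
    calc ‖((r23 : ℝ) : ℂ) * φ₁ s 0 / ((r12 : ℝ) : ℂ)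
          + ((r24 : ℝ) : ℂ) * (φ₁' s 0 + (Real.cos α : ℂ) * Complex.cos (s * (π:ℂ)))
            / ((r12 : ℝ) : ℂ)‖
        ≤ ‖((r23 : ℝ) : ℂ) * φ₁ s 0 / ((r12 : ℝ) : ℂ)‖
          + ‖((r24 : ℝ) : ℂ)
            * (φ₁' s 0 + (Real.cos α : ℂ) * Complex.cos (s * (π:ℂ))) / ((r12 : ℝ) : ℂ)‖ :=
          norm_add_le _ _
      _ = |r23| * ‖φ₁ s 0‖ / |r12|
          + |r24| * ‖φ₁' s 0 + (Real.cos α : ℂ) * Complex.cos (s * (π:ℂ))‖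
            / |r12| := by
          rw [norm_div, norm_div, norm_mul, norm_mul, WAsympt.norm_ofReal_eq_abs, WAsympt.norm_ofReal_eq_abs,
            WAsympt.norm_ofReal_eq_abs]
      _ ≤ |r23| * (c₁ * E / A) / |r12| + |r24| * (c₂ / A * E) / |r12| := by
          gcongr <;> first | exact hφ10 | exact k2
      _ = c₃ * E / A := by rw [hc₃]; field_simp
  have hy0 : ‖φ₂ s 0‖ ≤ c₄ * E := by
    have step1 : ‖φ₂ s 0‖
        = ‖(φ₂ s 0
            + ((r24 / r12 : ℝ) : ℂ) * (Real.cos α : ℂ) * Complex.cos (s * (π:ℂ)))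
          - ((r24 / r12 : ℝ) : ℂ) * (Real.cos α : ℂ) * Complex.cos (s * (π:ℂ))‖ := by
      congr 1; ring
    have step2 := norm_sub_le
      (φ₂ s 0 + ((r24 / r12 : ℝ) : ℂ) * (Real.cos α : ℂ) * Complex.cos (s * (π:ℂ)))
      (((r24 / r12 : ℝ) : ℂ) * (Real.cos α : ℂ) * Complex.cos (s * (π:ℂ)))
    have step3 : ‖((r24 / r12 : ℝ) : ℂ) * (Real.cos α : ℂ)
        * Complex.cos (s * (π:ℂ))‖ ≤ |r24| / |r12| * cα * E := by
      rw [norm_mul, norm_mul, WAsympt.norm_ofReal_eq_abs, WAsympt.norm_ofReal_eq_abs, abs_div]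
      exact mul_le_mul_of_nonneg_left hcosb
        (mul_nonneg (div_nonneg (abs_nonneg _) (abs_nonneg _)) hcα0)
    have step5 : c₃ * E / A ≤ c₃ * E := by
      rw [mul_div_assoc]
      exact mul_le_mul_of_nonneg_left hEA hc₃0
    calc ‖φ₂ s 0‖
        = ‖(φ₂ s 0
            + ((r24 / r12 : ℝ) : ℂ) * (Real.cos α : ℂ) * Complex.cos (s * (π:ℂ)))
          - ((r24 / r12 : ℝ) : ℂ) * (Real.cos α : ℂ) * Complex.cos (s * (π:ℂ))‖ := step1
      _ ≤ ‖φ₂ s 0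
            + ((r24 / r12 : ℝ) : ℂ) * (Real.cos α : ℂ) * Complex.cos (s * (π:ℂ))‖
          + ‖((r24 / r12 : ℝ) : ℂ) * (Real.cos α : ℂ)
            * Complex.cos (s * (π:ℂ))‖ := step2
      _ ≤ c₃ * E / A + |r24| / |r12| * cα * E := add_le_add hδ step3
      _ ≤ c₃ * E + |r24| / |r12| * cα * E := by linarith
      _ = c₄ * E := by rw [hc₄]; ring
  have hy1 : ‖φ₂' s 0‖ ≤ c₅ * E := by
    rw [hm' s]
    have : ‖-(((r13 : ℝ) : ℂ) * φ₁ s 0 + ((r14 : ℝ) : ℂ) * φ₁' s 0)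
        / ((r12 : ℝ) : ℂ)‖
        = (‖((r13 : ℝ) : ℂ) * φ₁ s 0 + ((r14 : ℝ) : ℂ) * φ₁' s 0‖) / |r12| := by
      rw [norm_div, norm_neg, WAsympt.norm_ofReal_eq_abs]
    rw [this]
    have step2 : ‖((r13 : ℝ) : ℂ) * φ₁ s 0 + ((r14 : ℝ) : ℂ) * φ₁' s 0‖
        ≤ |r13| * (c₁ * E / A) + |r14| * (c₁ * E) := by
      refine (norm_add_le _ _).trans ?_
      rw [norm_mul, norm_mul, WAsympt.norm_ofReal_eq_abs, WAsympt.norm_ofReal_eq_abs]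
      gcongr
    have step3 : |r13| * (c₁ * E / A) ≤ |r13| * (c₁ * E) := by
      gcongr
      rw [mul_div_assoc]
      exact mul_le_mul_of_nonneg_left hEA hc₁0
    calc ‖((r13 : ℝ) : ℂ) * φ₁ s 0 + ((r14 : ℝ) : ℂ) * φ₁' s 0‖ / |r12|
        ≤ (|r13| * (c₁ * E) + |r14| * (c₁ * E)) / |r12| := by
          have step2' : ‖((r13 : ℝ) : ℂ) * φ₁ s 0 + ((r14 : ℝ) : ℂ) * φ₁' s 0‖
              ≤ |r13| * (c₁ * E) + |r14| * (c₁ * E) :=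
            step2.trans (add_le_add step3 le_rfl)
          gcongr
      _ = c₅ * E := by rw [hc₅]; field_simp
  -- interval 2
  have hab2 : (0:ℝ) ≤ π := pi_pos.le
  have hsub2 : Set.Icc (0:ℝ) π ⊆ Set.Icc (-π) π := Set.Icc_subset_Icc hab1 le_rfl
  have heq2' : ∀ x ∈ Set.Icc (0:ℝ) π, φ₂'' s x = ((q x : ℂ) - s ^ 2) * φ₂ s x := by
    intro x hx; linear_combination -(heq2 s x hx)
  have hs2b : 2 * (Q * (π - 0)) ≤ A := by rw [sub_zero]; exact hA2
  have h3 := WAsympt.est_rem1 hab2 (hq.mono hsub2) (hd2 s) (hd2' s) heq2' hQ0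
    (fun x hx => hQb x (hsub2 hx)) hA1 hs2b
  have hcoe2 : ((π : ℝ) : ℂ) - ((0 : ℝ) : ℂ) = (π:ℂ) := by push_cast; ring
  rw [hcoe2, sub_zero] at h3
  -- h3 : abs (s*φ₂π - (s*φ₂0*cos(sπ) + φ₂'0*sin(sπ))) ≤ Q*(2*(|φ₂0| + |φ₂'0|/A))*E*π
  have hD : ‖s * φ₂ s π - (s * φ₂ s 0 * Complex.cos (s * (π:ℂ))
      + φ₂' s 0 * Complex.sin (s * (π:ℂ)))‖ ≤ c₆ * (E * E) := by
    refine h3.trans ?_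
    have h6 : ‖φ₂' s 0‖ / A ≤ c₅ * E := by
      refine (div_le_self (norm_nonneg _) hA1).trans hy1
    calc Q * (2 * (‖φ₂ s 0‖ + ‖φ₂' s 0‖ / A)) * E * π
        ≤ Q * (2 * (c₄ * E + c₅ * E)) * E * π := by gcongr
      _ = c₆ * (E * E) := by rw [hc₆]; ring
  -- final assembly
  have hsinβc : ((Real.sin β : ℝ) : ℂ) = 0 := by rw [hβ, Complex.ofReal_zero]
  have hkey : s * (((r12 : ℝ) : ℂ)
        * ((Real.cos β : ℂ) * φ₂ s π + (Real.sin β : ℂ) * φ₂' s π)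
      + ((r24 : ℝ) : ℂ) * (Real.cos α : ℂ) * (Real.cos β : ℂ) * Complex.cos (s * (π:ℂ)) ^ 2)
      = ((r12 : ℝ) : ℂ) * (Real.cos β : ℂ)
        * ((s * φ₂ s π - (s * φ₂ s 0 * Complex.cos (s * (π:ℂ))
            + φ₂' s 0 * Complex.sin (s * (π:ℂ))))
          + s * (φ₂ s 0 + ((r24 / r12 : ℝ) : ℂ) * (Real.cos α : ℂ)
              * Complex.cos (s * (π:ℂ))) * Complex.cos (s * (π:ℂ))
          + φ₂' s 0 * Complex.sin (s * (π:ℂ))) := by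
    have hcast : ((r24 / r12 : ℝ) : ℂ) * ((r12 : ℝ) : ℂ) = ((r24 : ℝ) : ℂ) := by
      rw [← Complex.ofReal_mul]
      congr 1
      field_simp
    rw [hsinβc]
    linear_combination (-s * (Real.cos α : ℂ) * (Real.cos β : ℂ)
      * Complex.cos (s * (π:ℂ)) ^ 2) * hcast
  have hcosβ : ‖(Real.cos β : ℂ)‖ ≤ 1 := by
    rw [WAsympt.norm_ofReal_eq_abs]; exact abs_cos_le_one β
  have hEE : E * E = Real.exp (2 * π * t) := by
    rw [hE, ← Real.exp_add]; congr 1; ring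
  have habsX : A * ‖((r12 : ℝ) : ℂ)
        * ((Real.cos β : ℂ) * φ₂ s π + (Real.sin β : ℂ) * φ₂' s π)
      + ((r24 : ℝ) : ℂ) * (Real.cos α : ℂ) * (Real.cos β : ℂ) * Complex.cos (s * (π:ℂ)) ^ 2‖
      ≤ |r12| * (c₆ + c₃ + c₅) * (E * E) := by
    rw [← norm_mul, hkey]
    calc ‖((r12 : ℝ) : ℂ) * (Real.cos β : ℂ)
          * ((s * φ₂ s π - (s * φ₂ s 0 * Complex.cos (s * (π:ℂ))
              + φ₂' s 0 * Complex.sin (s * (π:ℂ))))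
            + s * (φ₂ s 0 + ((r24 / r12 : ℝ) : ℂ) * (Real.cos α : ℂ)
                * Complex.cos (s * (π:ℂ))) * Complex.cos (s * (π:ℂ))
            + φ₂' s 0 * Complex.sin (s * (π:ℂ)))‖
        = |r12| * ‖(Real.cos β : ℂ)‖
          * ‖(s * φ₂ s π - (s * φ₂ s 0 * Complex.cos (s * (π:ℂ))
              + φ₂' s 0 * Complex.sin (s * (π:ℂ))))
            + s * (φ₂ s 0 + ((r24 / r12 : ℝ) : ℂ) * (Real.cos α : ℂ)
                * Complex.cos (s * (π:ℂ))) * Complex.cos (s * (π:ℂ))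
            + φ₂' s 0 * Complex.sin (s * (π:ℂ))‖ := by
          rw [norm_mul, norm_mul, WAsympt.norm_ofReal_eq_abs]
      _ ≤ |r12| * 1 * (c₆ * (E * E) + A * (c₃ * E / A) * E + c₅ * E * E) := by
          have tri : ‖(s * φ₂ s π - (s * φ₂ s 0 * Complex.cos (s * (π:ℂ))
              + φ₂' s 0 * Complex.sin (s * (π:ℂ))))
            + s * (φ₂ s 0 + ((r24 / r12 : ℝ) : ℂ) * (Real.cos α : ℂ)
                * Complex.cos (s * (π:ℂ))) * Complex.cos (s * (π:ℂ))
            + φ₂' s 0 * Complex.sin (s * (π:ℂ))‖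
              ≤ ‖s * φ₂ s π - (s * φ₂ s 0 * Complex.cos (s * (π:ℂ))
                + φ₂' s 0 * Complex.sin (s * (π:ℂ)))‖
              + ‖s * (φ₂ s 0 + ((r24 / r12 : ℝ) : ℂ) * (Real.cos α : ℂ)
                  * Complex.cos (s * (π:ℂ))) * Complex.cos (s * (π:ℂ))‖
              + ‖φ₂' s 0 * Complex.sin (s * (π:ℂ))‖ :=
            (norm_add_le _ _).trans (add_le_add_left (norm_add_le _ _) _)
          have t2 : ‖s * (φ₂ s 0 + ((r24 / r12 : ℝ) : ℂ) * (Real.cos α : ℂ)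
              * Complex.cos (s * (π:ℂ))) * Complex.cos (s * (π:ℂ))‖
              ≤ A * (c₃ * E / A) * E := by
            rw [norm_mul, norm_mul]
            gcongr <;> first | exact hδ | exact hcosb
          have t3 : ‖φ₂' s 0 * Complex.sin (s * (π:ℂ))‖ ≤ c₅ * E * E := by
            rw [norm_mul]
            gcongr <;> first | exact hy1 | exact hsinb
          gcongr
          exact tri.trans (by gcongr)
      _ ≤ |r12| * (c₆ + c₃ + c₅) * (E * E) := by
          rw [mul_one]
          have : A * (c₃ * E / A) * E = c₃ * (E * E) := by
            field_simp
          rw [this]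
          have : c₅ * E * E = c₅ * (E * E) := by ring
          rw [this]
          have : c₆ * (E * E) + c₃ * (E * E) + c₅ * (E * E)
              = (c₆ + c₃ + c₅) * (E * E) := by ring
          rw [this, mul_assoc]
  -- conclude
  have h9 : ‖((r12 : ℝ) : ℂ)
        * ((Real.cos β : ℂ) * φ₂ s π + (Real.sin β : ℂ) * φ₂' s π)
      + ((r24 : ℝ) : ℂ) * (Real.cos α : ℂ) * (Real.cos β : ℂ) * Complex.cos (s * (π:ℂ)) ^ 2‖
      ≤ |r12| * (c₆ + c₃ + c₅) * (E * E) / A := by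
    rw [le_div_iff₀ hA0, mul_comm]
    exact habsX
  refine h9.trans ?_
  rw [hEE, div_eq_mul_inv]
  have hexp0 : (0:ℝ) ≤ Real.exp (2 * π * t) := (Real.exp_pos _).le
  have hAinv : (0:ℝ) ≤ A⁻¹ := inv_nonneg.2 hA0.le
  calc |r12| * (c₆ + c₃ + c₅) * Real.exp (2 * π * t) * A⁻¹
      = |r12| * (c₆ + c₃ + c₅) * A⁻¹ * Real.exp (2 * π * t) := by ring
    _ ≤ (|r12| * (c₆ + c₃ + c₅) + 1) * A⁻¹ * Real.exp (2 * π * t) := by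
        gcongr
        linarith
end

section
/- Suppose sin α ≠ 0, sin β ≠ 0, ρ₂₄ ≠ 0, and let s_n satisfy s_n = (n - 1/2) + O(1/n). Let φ_{s_n} denote the eigenfunction φ₁(·, s_n²) on [-π,0]. Then φ_{s_n}(x) = sin α·cos((n - 1/2)(x+π)) + O(1/n) uniformly in x ∈ [-π,0]: there exist C, N such that for all n ≥ N and all x ∈ [-π,0], |φ_{s_n}(x) - sin α·cos((n-1/2)(x+π))| ≤ C/n. -/
open Real Set

private lemma deriv_Ici_of_Icc {E : Type*} [NormedAddCommGroup E] [NormedSpace ℝ E]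
    {f : ℝ → E} {d : E} {a b t : ℝ} (ht : t ∈ Ico a b)
    (h : HasDerivWithinAt f d (Icc a b) t) : HasDerivWithinAt f d (Ici t) t := by
  have hsub : Ici t ∩ Iio b ⊆ Icc a b := fun y hy => ⟨ht.1.trans hy.1, hy.2.le⟩
  have hmem : Ici t ∩ Iio b ∈ nhdsWithin t (Ici t) :=
    Filter.inter_mem self_mem_nhdsWithin (mem_nhdsWithin_of_mem_nhds (Iio_mem_nhds ht.2))
  exact (h.mono hsub).mono_of_mem_nhdsWithin hmem

private lemma exp_sub_one_le' {t T : ℝ} (ht : 0 ≤ t) (hT : t ≤ T) :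
    Real.exp t - 1 ≤ t * Real.exp T := by
  have h1 : (-t) + 1 ≤ Real.exp (-t) := Real.add_one_le_exp _
  have h2 : Real.exp t ≤ Real.exp T := Real.exp_le_exp.2 hT
  have h3 : Real.exp (-t) * Real.exp t = 1 := by rw [← Real.exp_add]; simp
  nlinarith [Real.exp_pos t, Real.exp_pos T]

private lemma abs_cos_sub_cos_le (a b : ℝ) : |Real.cos a - Real.cos b| ≤ |a - b| := by
  rw [Real.cos_sub_cos]
  have h1 : |Real.sin ((a + b) / 2)| ≤ 1 := Real.abs_sin_le_one _
  have h2 : |Real.sin ((a - b) / 2)| ≤ |(a - b) / 2| := Real.abs_sin_le_abs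
  rw [abs_mul, abs_mul]
  have h3 : |(-2 : ℝ)| = 2 := by norm_num
  rw [h3]
  calc 2 * |Real.sin ((a+b)/2)| * |Real.sin ((a-b)/2)| ≤ 2 * 1 * |(a-b)/2| := by
        apply mul_le_mul (by nlinarith [abs_nonneg (Real.sin ((a+b)/2))]) h2 (abs_nonneg _)
        norm_num
    _ = 2 * (|a - b| / 2) := by rw [abs_div]; norm_num
    _ = |a - b| := by ring

private lemma core_estimate (q : ℝ → ℝ) (M : ℝ) (hM1 : 1 ≤ M)
    (hMq : ∀ x ∈ Icc (-π) 0, |q x| ≤ M)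
    (α s : ℝ) (hs : 1 ≤ s)
    (f f' f'' : ℝ → ℂ)
    (hd : ∀ x ∈ Icc (-π) 0, HasDerivWithinAt f (f' x) (Icc (-π) 0) x)
    (hd' : ∀ x ∈ Icc (-π) 0, HasDerivWithinAt f' (f'' x) (Icc (-π) 0) x)
    (heq : ∀ x ∈ Icc (-π) 0, -f'' x + (q x : ℂ) * f x = ((s : ℝ) : ℂ) ^ 2 * f x)
    (hi : f (-π) = (Real.sin α : ℂ)) (hi' : f' (-π) = -(Real.cos α : ℂ)) :
    ∀ x ∈ Icc (-π) 0,
      ‖f x - ((Real.sin α : ℂ) * ((Real.cos (s * (x + π)) : ℝ) : ℂ)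
          - ((Real.cos α : ℂ) / ((s : ℝ) : ℂ)) * ((Real.sin (s * (x + π)) : ℝ) : ℂ))‖
        ≤ 2 * M * (|Real.sin α| + |Real.cos α|) * π * Real.exp (2 * M * π) / s := by
  have hπ := Real.pi_pos
  have hs0 : (0:ℝ) < s := lt_of_lt_of_le one_pos hs
  have hsc : ((s:ℝ):ℂ) ≠ 0 := by exact_mod_cast hs0.ne'
  set A : ℝ := |Real.sin α| + |Real.cos α| with hA
  have hA0 : 0 ≤ A := by positivity
  have hM0 : (0:ℝ) < M := lt_of_lt_of_le one_pos hM1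
  -- trig derivatives (complex-valued)
  have hcd : ∀ y : ℝ, HasDerivAt (fun z : ℝ => ((Real.cos (s * (z + π)) : ℝ) : ℂ))
      (-((s:ℝ):ℂ) * ((Real.sin (s * (y + π)) : ℝ) : ℂ)) y := by
    intro y
    have hlin : HasDerivAt (fun z : ℝ => s * (z + π)) s y := by
      simpa using ((hasDerivAt_id y).add_const π).const_mul s
    have h := ((Real.hasDerivAt_cos (s * (y + π))).comp y hlin).ofReal_comp
    exact h.congr_deriv (by push_cast; ring)
  have hgd : ∀ y : ℝ, HasDerivAt (fun z : ℝ => ((Real.sin (s * (z + π)) : ℝ) : ℂ))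
      (((s:ℝ):ℂ) * ((Real.cos (s * (y + π)) : ℝ) : ℂ)) y := by
    intro y
    have hlin : HasDerivAt (fun z : ℝ => s * (z + π)) s y := by
      simpa using ((hasDerivAt_id y).add_const π).const_mul s
    have h := ((Real.hasDerivAt_sin (s * (y + π))).comp y hlin).ofReal_comp
    exact h.congr_deriv (by push_cast; ring)
  -- the perturbation u and its derivative
  set u : ℝ → ℂ := fun y => f y - ((Real.sin α : ℂ) * ((Real.cos (s * (y + π)) : ℝ) : ℂ)
      - ((Real.cos α : ℂ) / ((s:ℝ):ℂ)) * ((Real.sin (s * (y + π)) : ℝ) : ℂ)) with hu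
  set u' : ℝ → ℂ := fun y => f' y - ((Real.sin α : ℂ) * (-((s:ℝ):ℂ) * ((Real.sin (s * (y + π)) : ℝ) : ℂ))
      - ((Real.cos α : ℂ) / ((s:ℝ):ℂ)) * (((s:ℝ):ℂ) * ((Real.cos (s * (y + π)) : ℝ) : ℂ))) with hu'
  set u'' : ℝ → ℂ := fun y => f'' y
      - ((Real.sin α : ℂ) * (-((s:ℝ):ℂ) * (((s:ℝ):ℂ) * ((Real.cos (s * (y + π)) : ℝ) : ℂ)))
      - ((Real.cos α : ℂ) / ((s:ℝ):ℂ)) * (((s:ℝ):ℂ) * (-((s:ℝ):ℂ) * ((Real.sin (s * (y + π)) : ℝ) : ℂ)))) with hu''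
  have huD : ∀ y ∈ Icc (-π) 0, HasDerivWithinAt u (u' y) (Icc (-π) 0) y := by
    intro y hy
    exact (hd y hy).sub
      (((hcd y).hasDerivWithinAt.const_mul ((Real.sin α : ℂ))).sub
        ((hgd y).hasDerivWithinAt.const_mul ((Real.cos α : ℂ) / ((s:ℝ):ℂ))))
  have hu'D : ∀ y ∈ Icc (-π) 0, HasDerivWithinAt u' (u'' y) (Icc (-π) 0) y := by
    intro y hy
    exact (hd' y hy).sub
      ((((hgd y).hasDerivWithinAt.const_mul (-((s:ℝ):ℂ))).const_mul ((Real.sin α : ℂ))).sub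
        (((hcd y).hasDerivWithinAt.const_mul (((s:ℝ):ℂ))).const_mul ((Real.cos α : ℂ) / ((s:ℝ):ℂ))))
  -- rotating frame
  set w : ℝ → ℂ × ℂ := fun y =>
      (((s:ℝ):ℂ) * (((Real.cos (s * (y + π)) : ℝ) : ℂ) * u y) - ((Real.sin (s * (y + π)) : ℝ) : ℂ) * u' y,
       ((s:ℝ):ℂ) * (((Real.sin (s * (y + π)) : ℝ) : ℂ) * u y) + ((Real.cos (s * (y + π)) : ℝ) : ℂ) * u' y) with hw
  set W : ℝ → ℂ × ℂ := fun y =>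
      (-((Real.sin (s * (y + π)) : ℝ) : ℂ) * ((q y : ℂ) * f y),
       ((Real.cos (s * (y + π)) : ℝ) : ℂ) * ((q y : ℂ) * f y)) with hW
  have hwD : ∀ y ∈ Icc (-π) 0, HasDerivWithinAt w (W y) (Icc (-π) 0) y := by
    intro y hy
    have h1 : HasDerivWithinAt (fun y => ((s:ℝ):ℂ) * (((Real.cos (s * (y + π)) : ℝ) : ℂ) * u y)
        - ((Real.sin (s * (y + π)) : ℝ) : ℂ) * u' y)
        (((s:ℝ):ℂ) * ((-((s:ℝ):ℂ) * ((Real.sin (s * (y + π)) : ℝ) : ℂ)) * u y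
            + ((Real.cos (s * (y + π)) : ℝ) : ℂ) * u' y)
          - ((((s:ℝ):ℂ) * ((Real.cos (s * (y + π)) : ℝ) : ℂ)) * u' y
            + ((Real.sin (s * (y + π)) : ℝ) : ℂ) * u'' y)) (Icc (-π) 0) y :=
      ((((hcd y).hasDerivWithinAt.mul (huD y hy)).const_mul (((s:ℝ):ℂ))).sub
        ((hgd y).hasDerivWithinAt.mul (hu'D y hy)))
    have h2 : HasDerivWithinAt (fun y => ((s:ℝ):ℂ) * (((Real.sin (s * (y + π)) : ℝ) : ℂ) * u y)
        + ((Real.cos (s * (y + π)) : ℝ) : ℂ) * u' y)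
        (((s:ℝ):ℂ) * (((((s:ℝ):ℂ) * ((Real.cos (s * (y + π)) : ℝ) : ℂ))) * u y
            + ((Real.sin (s * (y + π)) : ℝ) : ℂ) * u' y)
          + ((-((s:ℝ):ℂ) * ((Real.sin (s * (y + π)) : ℝ) : ℂ)) * u' y
            + ((Real.cos (s * (y + π)) : ℝ) : ℂ) * u'' y)) (Icc (-π) 0) y :=
      ((((hgd y).hasDerivWithinAt.mul (huD y hy)).const_mul (((s:ℝ):ℂ))).add
        ((hcd y).hasDerivWithinAt.mul (hu'D y hy)))
    have hfe : -f'' y + (q y : ℂ) * f y = ((s:ℝ):ℂ) ^ 2 * f y := heq y hy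
    convert h1.prodMk h2 using 1
    rw [hW]
    refine Prod.ext ?_ ?_
    · show -((Real.sin (s * (y + π)) : ℝ) : ℂ) * ((q y : ℂ) * f y) = _
      simp only [hu, hu', hu'']
      linear_combination -((Real.sin (s * (y + π)) : ℝ) : ℂ) * hfe
    · show ((Real.cos (s * (y + π)) : ℝ) : ℂ) * ((q y : ℂ) * f y) = _
      simp only [hu, hu', hu'']
      linear_combination ((Real.cos (s * (y + π)) : ℝ) : ℂ) * hfe
  -- u recovered from w
  have hrec : ∀ y : ℝ, s * ‖u y‖ ≤ 2 * ‖w y‖ := by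
    intro y
    have hpyth : ((Real.cos (s * (y + π)) : ℝ) : ℂ) ^ 2 + ((Real.sin (s * (y + π)) : ℝ) : ℂ) ^ 2 = 1 := by
      push_cast
      exact Complex.cos_sq_add_sin_sq _
    have hid : ((s:ℝ):ℂ) * u y = ((Real.cos (s * (y + π)) : ℝ) : ℂ) * (w y).1
        + ((Real.sin (s * (y + π)) : ℝ) : ℂ) * (w y).2 := by
      simp only [hw]
      linear_combination (-(((s:ℝ):ℂ) * u y)) * hpyth
    have h1 : s * ‖u y‖ = ‖((s:ℝ):ℂ) * u y‖ := by
      rw [norm_mul, Complex.norm_real, Real.norm_eq_abs, abs_of_pos hs0]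
    rw [h1, hid]
    calc ‖((Real.cos (s * (y + π)) : ℝ) : ℂ) * (w y).1
          + ((Real.sin (s * (y + π)) : ℝ) : ℂ) * (w y).2‖
        ≤ ‖((Real.cos (s * (y + π)) : ℝ) : ℂ) * (w y).1‖
          + ‖((Real.sin (s * (y + π)) : ℝ) : ℂ) * (w y).2‖ := norm_add_le _ _
      _ ≤ 1 * ‖(w y).1‖ + 1 * ‖(w y).2‖ := by
          rw [norm_mul, norm_mul, Complex.norm_real, Complex.norm_real, Real.norm_eq_abs, Real.norm_eq_abs]
          gcongr
          · exact Real.abs_cos_le_one _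
          · exact Real.abs_sin_le_one _
      _ ≤ 1 * ‖w y‖ + 1 * ‖w y‖ := by
          have l1 : ‖(w y).1‖ ≤ ‖w y‖ := norm_fst_le (w y)
          have l2 : ‖(w y).2‖ ≤ ‖w y‖ := norm_snd_le (w y)
          gcongr
      _ = 2 * ‖w y‖ := by ring
  -- bound on |f|
  have hfb : ∀ y : ℝ, ‖f y‖ ≤ ‖u y‖ + A := by
    intro y
    have : f y = u y + ((Real.sin α : ℂ) * ((Real.cos (s * (y + π)) : ℝ) : ℂ)
        - ((Real.cos α : ℂ) / ((s:ℝ):ℂ)) * ((Real.sin (s * (y + π)) : ℝ) : ℂ)) := by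
      simp [hu]
    rw [this]
    refine (norm_add_le _ _).trans ?_
    gcongr
    rw [sub_eq_add_neg]
    refine (norm_add_le _ _).trans ?_
    rw [norm_neg, norm_mul, norm_mul, norm_div]
    simp only [Complex.norm_real, Real.norm_eq_abs]
    rw [abs_of_pos hs0]
    calc |Real.sin α| * |Real.cos (s * (y + π))| + |Real.cos α| / s * |Real.sin (s * (y + π))|
        ≤ |Real.sin α| * 1 + |Real.cos α| / s * 1 := by
          gcongr
          · exact Real.abs_cos_le_one _
          · exact Real.abs_sin_le_one _
      _ = |Real.sin α| + |Real.cos α| / s := by ring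
      _ ≤ |Real.sin α| + |Real.cos α| := by
          gcongr
          exact div_le_self (abs_nonneg _) hs
  -- initial value of w is zero
  have hw0 : ‖w (-π)‖ = 0 := by
    have hz : s * (-π + π) = 0 := by ring
    have hu0 : u (-π) = 0 := by
      simp [hu, hz, hi]
    have hu'0 : u' (-π) = 0 := by
      simp only [hu', hz, Real.sin_zero, Real.cos_zero, hi']
      push_cast
      field_simp
      ring
    rw [norm_eq_zero, hw]
    simp [hu0, hu'0]
  -- Gronwall bound
  have hwcont : ContinuousOn w (Icc (-π) 0) := fun y hy => (hwD y hy).continuousWithinAt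
  have hGron := norm_le_gronwallBound_of_norm_deriv_right_le (f := w) (f' := W)
    (δ := 0) (K := 2 * M / s) (ε := M * A) (a := -π) (b := 0) hwcont
    (fun y hy => deriv_Ici_of_Icc hy (hwD y ⟨hy.1, hy.2.le⟩))
    (le_of_eq hw0)
    (by
      intro y hy
      have hqb : |q y| ≤ M := hMq y ⟨hy.1, hy.2.le⟩
      have hWb : ‖W y‖ ≤ M * ‖f y‖ := by
        rw [hW]
        rw [Prod.norm_def]
        dsimp only
        apply max_le
        · rw [neg_mul, norm_neg, norm_mul, Complex.norm_real, Real.norm_eq_abs, norm_mul, Complex.norm_real, Real.norm_eq_abs]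
          calc |Real.sin (s * (y + π))| * (|q y| * ‖f y‖)
              ≤ 1 * (M * ‖f y‖) := by
                gcongr
                exact Real.abs_sin_le_one _
            _ = M * ‖f y‖ := one_mul _
        · rw [norm_mul, Complex.norm_real, Real.norm_eq_abs, norm_mul, Complex.norm_real, Real.norm_eq_abs]
          calc |Real.cos (s * (y + π))| * (|q y| * ‖f y‖)
              ≤ 1 * (M * ‖f y‖) := by
                gcongr
                exact Real.abs_cos_le_one _
            _ = M * ‖f y‖ := one_mul _
      refine hWb.trans ?_
      have h1 : ‖f y‖ ≤ 2 * ‖w y‖ / s + A := by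
        have := hrec y
        have := hfb y
        have h2 : ‖u y‖ ≤ 2 * ‖w y‖ / s := by
          rw [le_div_iff₀ hs0]
          linarith [hrec y]
        linarith
      calc M * ‖f y‖ ≤ M * (2 * ‖w y‖ / s + A) := by gcongr
        _ = 2 * M / s * ‖w y‖ + M * A := by field_simp
      )
  -- evaluate the Gronwall bound
  intro x hx
  have hK0 : (2 * M / s) ≠ 0 := by positivity
  have hGx := hGron x hx
  have hxp : 0 ≤ x + π := by linarith [hx.1]
  have hxp2 : x + π ≤ π := by linarith [hx.2]
  have hgb : gronwallBound 0 (2 * M / s) (M * A) (x - (-π)) ≤ M * A * π * Real.exp (2 * M * π) := by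
    rw [gronwallBound_of_K_ne_0 hK0]
    have harg : 2 * M / s * (x - (-π)) ≤ 2 * M * π := by
      rw [div_mul_eq_mul_div, div_le_iff₀ hs0]
      have hxe : x - (-π) = x + π := by ring
      rw [hxe]
      have e1 : 2 * M * (x + π) ≤ 2 * M * π := by
        nlinarith [mul_nonneg hM0.le (sub_nonneg.2 hxp2)]
      have e2 : 2 * M * π ≤ 2 * M * π * s := by
        nlinarith [mul_nonneg (by positivity : (0:ℝ) ≤ 2 * M * π) (sub_nonneg.2 hs)]
      linarith
    have harg0 : 0 ≤ 2 * M / s * (x - (-π)) := by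
      apply mul_nonneg (by positivity)
      linarith
    have hexp := exp_sub_one_le' harg0 harg
    have hεK : M * A / (2 * M / s) = A * s / 2 := by field_simp
    rw [hεK]
    calc 0 * Real.exp (2 * M / s * (x - (-π))) + A * s / 2 * (Real.exp (2 * M / s * (x - (-π))) - 1)
        = A * s / 2 * (Real.exp (2 * M / s * (x - (-π))) - 1) := by ring
      _ ≤ A * s / 2 * (2 * M / s * (x - (-π)) * Real.exp (2 * M * π)) :=
          mul_le_mul_of_nonneg_left hexp (div_nonneg (mul_nonneg hA0 hs0.le) (by norm_num))
      _ = A * M * (x - (-π)) * Real.exp (2 * M * π) := by field_simp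
      _ ≤ M * A * π * Real.exp (2 * M * π) := by
          have hxe : x - (-π) = x + π := by ring
          rw [hxe]
          have := mul_le_mul_of_nonneg_left hxp2
            (mul_nonneg (mul_nonneg hA0 hM0.le) (Real.exp_pos (2 * M * π)).le)
          nlinarith [this]
  -- conclude
  have hux : ‖u x‖ ≤ 2 * M * A * π * Real.exp (2 * M * π) / s := by
    rw [le_div_iff₀ hs0]
    have h1 := hrec x
    have h2 : ‖w x‖ ≤ M * A * π * Real.exp (2 * M * π) := hGx.trans hgb
    nlinarith
  calc ‖f x - ((Real.sin α : ℂ) * ((Real.cos (s * (x + π)) : ℝ) : ℂ)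
          - ((Real.cos α : ℂ) / ((s:ℝ):ℂ)) * ((Real.sin (s * (x + π)) : ℝ) : ℂ))‖
      = ‖u x‖ := by rw [hu]
    _ ≤ 2 * M * A * π * Real.exp (2 * M * π) / s := hux
    _ = 2 * M * (|Real.sin α| + |Real.cos α|) * π * Real.exp (2 * M * π) / s := by rw [hA]

/-- Eigenfunction asymptotics in the case `sin α ≠ 0`, `sin β ≠ 0`, `ρ₂₄ ≠ 0`:
if `s_n = (n - 1/2) + O(1/n)`, then the eigenfunctions
`φ_{s_n} = φ₁(·, s_n²)` satisfy
`φ_{s_n}(x) = sin α·cos((n - 1/2)(x+π)) + O(1/n)` uniformly in `x ∈ [-π,0]`. -/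
theorem eigenfunction_asymptotics_case_i
    (q : ℝ → ℝ) (hq : ContinuousOn q (Set.Icc (-π) π))
    (α β : ℝ) (hα : Real.sin α ≠ 0) (hβ : Real.sin β ≠ 0)
    (a₁ a₂ a₃ a₄ b₁ b₂ b₃ b₄ : ℝ) (hρ24 : a₂ * b₄ - a₄ * b₂ ≠ 0)
    (φ₁ φ₁' φ₁'' : ℂ → ℝ → ℂ)
    (hd : ∀ s : ℂ, ∀ x ∈ Set.Icc (-π) 0,
      HasDerivWithinAt (φ₁ s) (φ₁' s x) (Set.Icc (-π) 0) x)
    (hd' : ∀ s : ℂ, ∀ x ∈ Set.Icc (-π) 0,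
      HasDerivWithinAt (φ₁' s) (φ₁'' s x) (Set.Icc (-π) 0) x)
    (heq : ∀ s : ℂ, ∀ x ∈ Set.Icc (-π) 0,
      -φ₁'' s x + (q x : ℂ) * φ₁ s x = s ^ 2 * φ₁ s x)
    (hi : ∀ s : ℂ, φ₁ s (-π) = (Real.sin α : ℂ))
    (hi' : ∀ s : ℂ, φ₁' s (-π) = -(Real.cos α : ℂ))
    -- the sequence s_n satisfies s_n = (n - 1/2) + O(1/n)
    (sn : ℕ → ℝ) (C₀ : ℝ) (N₀ : ℕ)
    (hsn : ∀ n : ℕ, N₀ ≤ n → |sn n - ((n : ℝ) - 1 / 2)| ≤ C₀ / n) :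
    ∃ C : ℝ, ∃ N : ℕ, ∀ n : ℕ, N ≤ n → ∀ x ∈ Set.Icc (-π) 0,
      ‖φ₁ ((sn n : ℝ) : ℂ) x
          - (Real.sin α : ℂ) * Real.cos (((n : ℝ) - 1 / 2) * (x + π))‖
        ≤ C / n := by
  have hπ := Real.pi_pos
  obtain ⟨M₀, hM₀⟩ := isCompact_Icc.exists_bound_of_continuousOn hq
  set M : ℝ := max M₀ 1 with hM
  have hM1 : (1:ℝ) ≤ M := le_max_right _ _
  have hM0 : (0:ℝ) < M := lt_of_lt_of_le one_pos hM1
  have hMq : ∀ x ∈ Icc (-π) 0, |q x| ≤ M := by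
    intro x hx
    have := hM₀ x ⟨hx.1, hx.2.trans hπ.le⟩
    rw [Real.norm_eq_abs] at this
    exact this.trans (le_max_left _ _)
  set A : ℝ := |Real.sin α| + |Real.cos α| with hA
  set B : ℝ := 2 * M * A * π * Real.exp (2 * M * π) with hB
  have hB0 : 0 ≤ B := by positivity
  refine ⟨2 * (B + |Real.cos α|) + |Real.sin α| * C₀ * π, max N₀ (⌈2 * C₀⌉₊ + 2), ?_⟩
  intro n hn x hx
  have hnN₀ : N₀ ≤ n := le_trans (le_max_left _ _) hn
  have hn2 : ⌈2 * C₀⌉₊ + 2 ≤ n := le_trans (le_max_right _ _) hn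
  have hn2' : (2:ℕ) ≤ n := le_trans (by omega) hn2
  have hn0 : (0:ℝ) < n := by exact_mod_cast Nat.pos_of_ne_zero (by omega)
  have hn1 : (1:ℝ) ≤ n := by exact_mod_cast le_trans (by omega : (1:ℕ) ≤ 2) hn2'
  have hsn' := hsn n hnN₀
  have hC0 : 0 ≤ C₀ := by
    by_contra h
    push_neg at h
    have : C₀ / n < 0 := div_neg_of_neg_of_pos h hn0
    linarith [abs_nonneg (sn n - ((n:ℝ) - 1/2))]
  have hcast : (2 * C₀ + 2 : ℝ) ≤ n := by
    have h1 : ((⌈2 * C₀⌉₊ : ℕ) : ℝ) + 2 ≤ n := by exact_mod_cast hn2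
    have h2 : 2 * C₀ ≤ (⌈2 * C₀⌉₊ : ℝ) := Nat.le_ceil _
    linarith
  have hCn : C₀ / n ≤ C₀ := div_le_self hC0 hn1
  have habs := abs_le.1 hsn'
  have hs_half : (n:ℝ) / 2 ≤ sn n := by
    have := habs.1
    linarith
  have hs1 : (1:ℝ) ≤ sn n := by linarith
  have hs0 : (0:ℝ) < sn n := lt_of_lt_of_le one_pos hs1
  have hcore := core_estimate q M hM1 hMq α (sn n) hs1
    (φ₁ ((sn n : ℝ) : ℂ)) (φ₁' ((sn n : ℝ) : ℂ)) (φ₁'' ((sn n : ℝ) : ℂ))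
    (hd _) (hd' _) (heq _) (hi _) (hi' _) x hx
  -- split off the remainder
  set r : ℝ := Real.sin α * (Real.cos (sn n * (x + π)) - Real.cos (((n:ℝ) - 1/2) * (x + π)))
      - (Real.cos α / sn n) * Real.sin (sn n * (x + π)) with hr
  have hsplit : φ₁ ((sn n : ℝ) : ℂ) x - (Real.sin α : ℂ) * (Real.cos (((n:ℝ) - 1/2) * (x + π)) : ℝ)
      = (φ₁ ((sn n : ℝ) : ℂ) x - ((Real.sin α : ℂ) * ((Real.cos (sn n * (x + π)) : ℝ) : ℂ)
          - ((Real.cos α : ℂ) / ((sn n : ℝ) : ℂ)) * ((Real.sin (sn n * (x + π)) : ℝ) : ℂ)))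
        + ((r : ℝ) : ℂ) := by
    rw [hr]
    push_cast
    ring
  have hxp : 0 ≤ x + π := by linarith [hx.1]
  have hxp2 : x + π ≤ π := by linarith [hx.2]
  have hcosdiff : |Real.cos (sn n * (x + π)) - Real.cos (((n:ℝ) - 1/2) * (x + π))|
      ≤ C₀ / n * π := by
    refine (Real.abs_cos_sub_cos_le _ _).trans ?_
    have : sn n * (x + π) - ((n:ℝ) - 1/2) * (x + π) = (sn n - ((n:ℝ) - 1/2)) * (x + π) := by ring
    rw [this, abs_mul, abs_of_nonneg hxp]
    gcongr
  have hrb : |r| ≤ |Real.sin α| * (C₀ / n * π) + |Real.cos α| / sn n := by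
    rw [hr]
    have t1 : |Real.sin α * (Real.cos (sn n * (x + π)) - Real.cos (((n:ℝ) - 1/2) * (x + π)))|
        ≤ |Real.sin α| * (C₀ / n * π) := by
      rw [abs_mul]
      exact mul_le_mul_of_nonneg_left hcosdiff (abs_nonneg _)
    have t2 : |(Real.cos α / sn n) * Real.sin (sn n * (x + π))| ≤ |Real.cos α| / sn n := by
      rw [abs_mul, abs_div, abs_of_pos hs0]
      calc |Real.cos α| / sn n * |Real.sin (sn n * (x + π))|
          ≤ |Real.cos α| / sn n * 1 :=
            mul_le_mul_of_nonneg_left (Real.abs_sin_le_one _) (by positivity)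
        _ = |Real.cos α| / sn n := mul_one _
    exact (abs_sub _ _).trans (add_le_add t1 t2)
  have hinv : 1 / sn n ≤ 2 / n := by
    rw [div_le_div_iff₀ hs0 hn0]
    linarith
  calc ‖φ₁ ((sn n : ℝ) : ℂ) x
          - (Real.sin α : ℂ) * (Real.cos (((n:ℝ) - 1/2) * (x + π)) : ℝ)‖
      ≤ ‖φ₁ ((sn n : ℝ) : ℂ) x - ((Real.sin α : ℂ) * ((Real.cos (sn n * (x + π)) : ℝ) : ℂ)
          - ((Real.cos α : ℂ) / ((sn n : ℝ) : ℂ)) * ((Real.sin (sn n * (x + π)) : ℝ) : ℂ))‖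
        + ‖((r : ℝ) : ℂ)‖ := by
        rw [hsplit]
        exact norm_add_le _ _
    _ ≤ B / sn n + (|Real.sin α| * (C₀ / n * π) + |Real.cos α| / sn n) :=
        add_le_add hcore (by rw [Complex.norm_real, Real.norm_eq_abs]; exact hrb)
    _ ≤ B * (2 / n) + (|Real.sin α| * (C₀ / n * π) + |Real.cos α| * (2 / n)) := by
        have hb1 : B / sn n ≤ B * (2 / n) := by
          rw [div_eq_mul_one_div B]
          exact mul_le_mul_of_nonneg_left hinv hB0
        have hb2 : |Real.cos α| / sn n ≤ |Real.cos α| * (2 / n) := by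
          rw [div_eq_mul_one_div (|Real.cos α|)]
          exact mul_le_mul_of_nonneg_left hinv (abs_nonneg _)
        linarith
    _ = (2 * (B + |Real.cos α|) + |Real.sin α| * C₀ * π) / n := by field_simp; ring
end
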